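/- arXiv:1501.00671 — 7 statements merged into one kernel-verified Lean document; each statement's English description precedes it below -/
import Mathlib

section
/- Let f = g·h and f = u·v be two nontrivial variable-disjoint factorizations of a polynomial f in F⟨X⟩ (i.e., Var(g) ∩ Var(h) = ∅ and Var(u) ∩ Var(v) = ∅, with all four factors of positive degree). Then either Var(g) ⊆ Var(u) and Var(v) ⊆ Var(h), or Var(u) ⊆ Var(g) and Var(h) ⊆ Var(v). -/
/-- Degree of a noncommutative polynomial: max length of a monomial with nonzero coefficient. -/
noncomputable def deg {F X : Type} [Field F] (f : MonoidAlgebra F (FreeMonoid X)) : Nat :=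
  f.coeff.support.sup FreeMonoid.length

/-- Set of variables occurring in nonzero monomials of `f`. -/
def vars {F X : Type} [Field F] (f : MonoidAlgebra F (FreeMonoid X)) : Set X :=
  {x | ∃ m ∈ f.coeff.support, x ∈ FreeMonoid.toList m}

/-- `f` is irreducible: no factorization into two factors of positive degree. -/
def Irred {F X : Type} [Field F] (f : MonoidAlgebra F (FreeMonoid X)) : Prop :=
  ¬ ∃ g h : MonoidAlgebra F (FreeMonoid X), f = g * h ∧ 0 < deg g ∧ 0 < deg h

/-- `f` is variable-disjoint irreducible. -/
def VDIrred {F X : Type} [Field F] (f : MonoidAlgebra F (FreeMonoid X)) : Prop :=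
  ¬ ∃ g h : MonoidAlgebra F (FreeMonoid X),
      f = g * h ∧ 0 < deg g ∧ 0 < deg h ∧ vars g ∩ vars h = ∅

/-- `f` is homogeneous of degree `d`. -/
def Homog {F X : Type} [Field F] (f : MonoidAlgebra F (FreeMonoid X)) (d : Nat) : Prop :=
  ∀ m ∈ f.coeff.support, FreeMonoid.length m = d

/-- Uniqueness of variable-disjoint splittings of a word. -/
lemma aux_uniq {F X : Type} [Field F] {g h : MonoidAlgebra F (FreeMonoid X)}
    (hd : vars g ∩ vars h = ∅) {m n a b : FreeMonoid X}
    (hm : m ∈ g.coeff.support) (hn : n ∈ h.coeff.support) (ha : a ∈ g.coeff.support) (hb : b ∈ h.coeff.support)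
    (hab : a * b = m * n) : a = m ∧ b = n := by
  have h1 : FreeMonoid.toList a ++ FreeMonoid.toList b
      = FreeMonoid.toList m ++ FreeMonoid.toList n := by
    rw [← FreeMonoid.toList_mul, ← FreeMonoid.toList_mul, hab]
  have hempty : ∀ x : X, x ∈ vars g → x ∈ vars h → False := by
    intro x h1 h2
    have : x ∈ vars g ∩ vars h := ⟨h1, h2⟩
    rw [hd] at this; exact this
  rcases List.append_eq_append_iff.mp h1 with ⟨s, hs1, hs2⟩ | ⟨s, hs1, hs2⟩
  · -- toList m = toList a ++ s, toList b = s ++ toList n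
    have hs : s = [] := by
      by_contra hne
      obtain ⟨x, hx⟩ := List.exists_mem_of_ne_nil s hne
      exact hempty x ⟨m, hm, by rw [hs1]; exact List.mem_append_right _ hx⟩
          ⟨b, hb, by rw [hs2]; exact List.mem_append_left _ hx⟩
    subst hs
    simp only [List.append_nil, List.nil_append] at hs1 hs2
    exact ⟨FreeMonoid.toList.injective hs1.symm, FreeMonoid.toList.injective hs2⟩
  · -- toList a = toList m ++ s, toList n = s ++ toList b
    have hs : s = [] := by
      by_contra hne
      obtain ⟨x, hx⟩ := List.exists_mem_of_ne_nil s hne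
      exact hempty x ⟨a, ha, by rw [hs1]; exact List.mem_append_right _ hx⟩
          ⟨n, hn, by rw [hs2]; exact List.mem_append_left _ hx⟩
    subst hs
    simp only [List.append_nil, List.nil_append] at hs1 hs2
    exact ⟨FreeMonoid.toList.injective hs1, FreeMonoid.toList.injective hs2.symm⟩

/-- Under variable-disjointness, products of support words lie in the support of the product. -/
lemma aux_mem_support_mul {F X : Type} [Field F] {g h : MonoidAlgebra F (FreeMonoid X)}
    (hd : vars g ∩ vars h = ∅) {m n : FreeMonoid X}
    (hm : m ∈ g.coeff.support) (hn : n ∈ h.coeff.support) : m * n ∈ (g * h).coeff.support := by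
  classical
  rw [Finsupp.mem_support_iff]
  have : (g * h).coeff (m * n) = g.coeff m * h.coeff n := by
    rw [MonoidAlgebra.coeff_mul]
    simp only [Finsupp.sum]
    rw [Finset.sum_eq_single_of_mem m hm]
    · rw [Finset.sum_eq_single_of_mem n hn]
      · simp
      · intro b hb hbn
        rw [if_neg]
        intro hc
        exact hbn (aux_uniq hd hm hn hm hb hc).2
    · intro a ha ham
      apply Finset.sum_eq_zero
      intro b hb
      rw [if_neg]
      intro hc
      exact ham (aux_uniq hd hm hn ha hb hc).1
  rw [this]
  exact mul_ne_zero (Finsupp.mem_support_iff.mp hm) (Finsupp.mem_support_iff.mp hn)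

lemma aux_vars_mul_subset {F X : Type} [Field F] (g h : MonoidAlgebra F (FreeMonoid X)) :
    vars (g * h) ⊆ vars g ∪ vars h := by
  classical
  rintro x ⟨w, hw, hxw⟩
  obtain ⟨p, hp, q, hq, rfl⟩ := Finset.mem_mul.mp (MonoidAlgebra.support_coeff_mul_subset g h hw)
  rw [FreeMonoid.toList_mul] at hxw
  rcases List.mem_append.mp hxw with hx | hx
  · exact Or.inl ⟨p, hp, hx⟩
  · exact Or.inr ⟨q, hq, hx⟩

lemma aux_support_nonempty {F X : Type} [Field F] {g : MonoidAlgebra F (FreeMonoid X)}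
    (hg : 0 < deg g) : g.coeff.support.Nonempty := by
  rcases Finset.eq_empty_or_nonempty g.coeff.support with he | hne
  · exfalso; rw [deg, he, Finset.sup_empty] at hg; exact Nat.lt_irrefl 0 hg
  · exact hne

lemma aux_vars_left {F X : Type} [Field F] {g h : MonoidAlgebra F (FreeMonoid X)}
    (hd : vars g ∩ vars h = ∅) (hh : h.coeff.support.Nonempty) : vars g ⊆ vars (g * h) := by
  rintro x ⟨m, hm, hxm⟩
  obtain ⟨n, hn⟩ := hh
  exact ⟨m * n, aux_mem_support_mul hd hm hn, by
    rw [FreeMonoid.toList_mul]; exact List.mem_append_left _ hxm⟩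

lemma aux_vars_right {F X : Type} [Field F] {g h : MonoidAlgebra F (FreeMonoid X)}
    (hd : vars g ∩ vars h = ∅) (hg : g.coeff.support.Nonempty) : vars h ⊆ vars (g * h) := by
  rintro x ⟨n, hn, hxn⟩
  obtain ⟨m, hm⟩ := hg
  exact ⟨m * n, aux_mem_support_mul hd hm hn, by
    rw [FreeMonoid.toList_mul]; exact List.mem_append_right _ hxn⟩

theorem stmt5 {F X : Type} [Field F] (f g h u v : MonoidAlgebra F (FreeMonoid X))
    (h1 : f = g * h) (h2 : f = u * v)
    (hd1 : vars g ∩ vars h = ∅) (hd2 : vars u ∩ vars v = ∅)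
    (hg : 0 < deg g) (hh : 0 < deg h) (hu : 0 < deg u) (hv : 0 < deg v) :
    (vars g ⊆ vars u ∧ vars v ⊆ vars h) ∨ (vars u ⊆ vars g ∧ vars h ⊆ vars v) := by
  classical
  have hgne := aux_support_nonempty hg
  have hhne := aux_support_nonempty hh
  have hune := aux_support_nonempty hu
  have hvne := aux_support_nonempty hv
  have hd1' : ∀ x : X, x ∈ vars g → x ∈ vars h → False := fun x a b => by
    have : x ∈ vars g ∩ vars h := ⟨a, b⟩; rw [hd1] at this; exact this
  have hd2' : ∀ x : X, x ∈ vars u → x ∈ vars v → False := fun x a b => by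
    have : x ∈ vars u ∩ vars v := ⟨a, b⟩; rw [hd2] at this; exact this
  -- vars f equalities (as inclusions)
  have hgf : vars g ⊆ vars u ∪ vars v := fun x hx =>
    aux_vars_mul_subset u v (h2 ▸ (h1 ▸ aux_vars_left hd1 hhne hx))
  have hhf : vars h ⊆ vars u ∪ vars v := fun x hx =>
    aux_vars_mul_subset u v (h2 ▸ (h1 ▸ aux_vars_right hd1 hgne hx))
  have huf : vars u ⊆ vars g ∪ vars h := fun x hx =>
    aux_vars_mul_subset g h (h1 ▸ (h2 ▸ aux_vars_left hd2 hvne hx))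
  have hvf : vars v ⊆ vars g ∪ vars h := fun x hx =>
    aux_vars_mul_subset g h (h1 ▸ (h2 ▸ aux_vars_right hd2 hune hx))
  -- key disjointness dichotomy
  by_cases hc : ∀ x : X, x ∈ vars g → x ∈ vars v → False
  · left
    constructor
    · intro x hx
      rcases hgf hx with hxu | hxv
      · exact hxu
      · exact absurd hxv (fun hxv => hc x hx hxv)
    · intro x hx
      rcases hvf hx with hxg | hxh
      · exact absurd hxg (fun hxg => hc x hxg hx)
      · exact hxh
  · -- obtain x ∈ vars g ∩ vars v
    push_neg at hc
    obtain ⟨x, hxg, hxv, -⟩ := hc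
    have hBC : ∀ y : X, y ∈ vars h → y ∈ vars u → False := by
      intro y hyh hyu
      obtain ⟨m, hm, hxm⟩ := hxg
      obtain ⟨n, hn, hyn⟩ := hyh
      have hw : m * n ∈ (u * v).coeff.support := by
        rw [← h2, h1]; exact aux_mem_support_mul hd1 hm hn
      obtain ⟨p, hp, q, hq, hpq⟩ := Finset.mem_mul.mp (MonoidAlgebra.support_coeff_mul_subset u v hw)
      have hl : FreeMonoid.toList p ++ FreeMonoid.toList q
          = FreeMonoid.toList m ++ FreeMonoid.toList n := by
        rw [← FreeMonoid.toList_mul, ← FreeMonoid.toList_mul, hpq]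
      rcases List.append_eq_append_iff.mp hl with ⟨s, hs1, hs2⟩ | ⟨s, hs1, hs2⟩
      · -- toList m = toList p ++ s, toList q = s ++ toList n : y ∈ q ⇒ y ∈ vars v
        exact hd2' y hyu ⟨q, hq, by rw [hs2]; exact List.mem_append_right _ hyn⟩
      · -- toList p = toList m ++ s : x ∈ p ⇒ x ∈ vars u
        exact hd2' x ⟨p, hp, by rw [hs1]; exact List.mem_append_left _ hxm⟩ hxv
    right
    constructor
    · intro y hy
      rcases huf hy with hyg | hyh
      · exact hyg
      · exact absurd hyh (fun hyh => hBC y hyh hy)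
    · intro y hy
      rcases hhf hy with hyu | hyv
      · exact absurd hyu (fun hyu => hBC y hy hyu)
      · exact hyv
end

section
/- Let f ∈ F⟨X⟩ and suppose f = g·h and f = u·v are two nontrivial variable-disjoint factorizations of f such that Var(g) = Var(u). Then there exist nonzero scalars α, β ∈ F with g = α·u and h = β·v. -/
section aux

variable {F X : Type} [Field F]

lemma split_unique {A B : Set X} (hAB : ∀ x, x ∈ A → x ∈ B → False)
    {a a' b b' : FreeMonoid X}
    (ha : ∀ x ∈ FreeMonoid.toList a, x ∈ A) (ha' : ∀ x ∈ FreeMonoid.toList a', x ∈ A)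
    (hb : ∀ x ∈ FreeMonoid.toList b, x ∈ B) (hb' : ∀ x ∈ FreeMonoid.toList b', x ∈ B)
    (heq : a * b = a' * b') : a = a' ∧ b = b' := by
  have hl : FreeMonoid.toList a ++ FreeMonoid.toList b
      = FreeMonoid.toList a' ++ FreeMonoid.toList b' := by
    rw [← FreeMonoid.toList_mul, ← FreeMonoid.toList_mul, heq]
  have hinj : Function.Injective (@FreeMonoid.toList X) := FreeMonoid.toList.injective
  rcases List.append_eq_append_iff.1 hl with ⟨m, hm1, hm2⟩ | ⟨m, hm1, hm2⟩
  · -- a' = a ++ m, b = m ++ b'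
    have hmnil : m = [] := by
      cases m with
      | nil => rfl
      | cons x xs =>
        exact absurd (hAB x (ha' x (by simp [hm1])) (hb x (by simp [hm2]))) (fun H => H)
    subst hmnil
    simp only [List.append_nil, List.nil_append] at hm1 hm2
    exact ⟨hinj hm1.symm, hinj hm2⟩
  · -- a = a' ++ m, b' = m ++ b
    have hmnil : m = [] := by
      cases m with
      | nil => rfl
      | cons x xs =>
        exact absurd (hAB x (ha x (by simp [hm1])) (hb' x (by simp [hm2]))) (fun H => H)
    subst hmnil
    simp only [List.append_nil, List.nil_append] at hm1 hm2
    exact ⟨hinj hm1, hinj hm2.symm⟩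

lemma coeff_mul_disj {A B : Set X} (hAB : ∀ x, x ∈ A → x ∈ B → False)
    (g h : MonoidAlgebra F (FreeMonoid X))
    (hgA : ∀ m ∈ g.coeff.support, ∀ x ∈ FreeMonoid.toList m, x ∈ A)
    (hhB : ∀ m ∈ h.coeff.support, ∀ x ∈ FreeMonoid.toList m, x ∈ B)
    {a b : FreeMonoid X}
    (ha : ∀ x ∈ FreeMonoid.toList a, x ∈ A) (hb : ∀ x ∈ FreeMonoid.toList b, x ∈ B) :
    (g * h).coeff (a * b) = g.coeff a * h.coeff b := by
  classical
  rw [MonoidAlgebra.coeff_mul, Finsupp.sum]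
  by_cases hga : a ∈ g.coeff.support
  · by_cases hhb : b ∈ h.coeff.support
    · rw [Finset.sum_eq_single a]
      · rw [Finsupp.sum, Finset.sum_eq_single b]
        · simp
        · intro b₂ hb₂ hne
          rw [if_neg]
          intro hc
          exact hne (split_unique hAB ha ha (hhB b₂ hb₂) hb hc).2
        · intro hc; exact absurd hhb hc
      · intro a₁ ha₁ hne
        rw [Finsupp.sum]
        apply Finset.sum_eq_zero
        intro b₂ hb₂
        rw [if_neg]
        intro hc
        exact hne (split_unique hAB (hgA a₁ ha₁) ha (hhB b₂ hb₂) hb hc).1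
      · intro hc; exact absurd hga hc
    · rw [Finsupp.notMem_support_iff.1 hhb, mul_zero]
      apply Finset.sum_eq_zero
      intro a₁ ha₁
      rw [Finsupp.sum]
      apply Finset.sum_eq_zero
      intro b₂ hb₂
      rw [if_neg]
      intro hc
      exact hhb ((split_unique hAB (hgA a₁ ha₁) ha (hhB b₂ hb₂) hb hc).2 ▸ hb₂)
  · rw [Finsupp.notMem_support_iff.1 hga, zero_mul]
    apply Finset.sum_eq_zero
    intro a₁ ha₁
    rw [Finsupp.sum]
    apply Finset.sum_eq_zero
    intro b₂ hb₂
    rw [if_neg]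
    intro hc
    exact hga ((split_unique hAB (hgA a₁ ha₁) ha (hhB b₂ hb₂) hb hc).1 ▸ ha₁)

lemma exists_split (g h : MonoidAlgebra F (FreeMonoid X)) {w : FreeMonoid X}
    (hw : w ∈ (g * h).coeff.support) :
    ∃ a ∈ g.coeff.support, ∃ b ∈ h.coeff.support, w = a * b := by
  classical
  have hne : (g * h).coeff w ≠ 0 := Finsupp.mem_support_iff.1 hw
  rw [MonoidAlgebra.coeff_mul, Finsupp.sum] at hne
  obtain ⟨a, hag, hane⟩ := Finset.exists_ne_zero_of_sum_ne_zero hne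
  rw [Finsupp.sum] at hane
  obtain ⟨b, hbh, hbne⟩ := Finset.exists_ne_zero_of_sum_ne_zero hane
  refine ⟨a, hag, b, hbh, ?_⟩
  by_contra hc
  rw [if_neg (fun H => hc H.symm)] at hbne
  exact hbne rfl

lemma support_letters (g : MonoidAlgebra F (FreeMonoid X)) :
    ∀ m ∈ g.coeff.support, ∀ x ∈ FreeMonoid.toList m, x ∈ vars g :=
  fun m hm x hx => ⟨m, hm, hx⟩

lemma supp_nonempty_of_deg_pos {g : MonoidAlgebra F (FreeMonoid X)} (hg : 0 < deg g) :
    g.coeff.support.Nonempty := by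
  rcases Finset.eq_empty_or_nonempty g.coeff.support with he | hne
  · exfalso; unfold deg at hg; rw [he] at hg; simp at hg
  · exact hne

end aux

theorem stmt6 {F X : Type} [Field F] (f g h u v : MonoidAlgebra F (FreeMonoid X))
    (h1 : f = g * h) (h2 : f = u * v)
    (hd1 : vars g ∩ vars h = ∅) (hd2 : vars u ∩ vars v = ∅)
    (hg : 0 < deg g) (hh : 0 < deg h) (hu : 0 < deg u) (hv : 0 < deg v)
    (hgu : vars g = vars u) :
    ∃ α β : F, α ≠ 0 ∧ β ≠ 0 ∧ g = α • u ∧ h = β • v := by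
  classical
  have hAB : ∀ x, x ∈ vars g → x ∈ vars h ∪ vars v → False := by
    intro x hxA hxB
    rcases hxB with hxh | hxv
    · exact absurd (Set.mem_inter hxA hxh) (by rw [hd1]; exact Set.notMem_empty x)
    · exact absurd (Set.mem_inter (hgu ▸ hxA) hxv) (by rw [hd2]; exact Set.notMem_empty x)
  have hgA : ∀ m ∈ g.coeff.support, ∀ x ∈ FreeMonoid.toList m, x ∈ vars g := support_letters g
  have huA : ∀ m ∈ u.coeff.support, ∀ x ∈ FreeMonoid.toList m, x ∈ vars g := by
    intro m hm x hx; rw [hgu]; exact support_letters u m hm x hx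
  have hhB : ∀ m ∈ h.coeff.support, ∀ x ∈ FreeMonoid.toList m, x ∈ vars h ∪ vars v :=
    fun m hm x hx => Or.inl (support_letters h m hm x hx)
  have hvB : ∀ m ∈ v.coeff.support, ∀ x ∈ FreeMonoid.toList m, x ∈ vars h ∪ vars v :=
    fun m hm x hx => Or.inr (support_letters v m hm x hx)
  -- key1 : from supp g × supp h to supp u × supp v
  have key1 : ∀ a ∈ g.coeff.support, ∀ b ∈ h.coeff.support,
      a ∈ u.coeff.support ∧ b ∈ v.coeff.support ∧ g.coeff a * h.coeff b = u.coeff a * v.coeff b := by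
    intro a hag b hbh
    have hcoef : (g * h).coeff (a * b) = g.coeff a * h.coeff b :=
      coeff_mul_disj hAB g h hgA hhB (hgA a hag) (hhB b hbh)
    have hne : (g * h).coeff (a * b) ≠ 0 := by
      rw [hcoef]
      exact mul_ne_zero (Finsupp.mem_support_iff.1 hag) (Finsupp.mem_support_iff.1 hbh)
    have hmem : a * b ∈ (u * v).coeff.support := by
      rw [← h2, h1]; exact Finsupp.mem_support_iff.2 hne
    obtain ⟨a', ha'u, b', hb'v, heq⟩ := exists_split u v hmem
    obtain ⟨hae, hbe⟩ := split_unique hAB (hgA a hag) (huA a' ha'u)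
      (hhB b hbh) (hvB b' hb'v) heq
    subst hae; subst hbe
    refine ⟨ha'u, hb'v, ?_⟩
    rw [← hcoef, h1.symm.trans h2]
    exact coeff_mul_disj hAB u v huA hvB (huA a ha'u) (hvB b hb'v)
  have key2 : ∀ a ∈ u.coeff.support, ∀ b ∈ v.coeff.support,
      a ∈ g.coeff.support ∧ b ∈ h.coeff.support ∧ g.coeff a * h.coeff b = u.coeff a * v.coeff b := by
    intro a hau b hbv
    have hcoef : (u * v).coeff (a * b) = u.coeff a * v.coeff b :=
      coeff_mul_disj hAB u v huA hvB (huA a hau) (hvB b hbv)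
    have hne : (u * v).coeff (a * b) ≠ 0 := by
      rw [hcoef]
      exact mul_ne_zero (Finsupp.mem_support_iff.1 hau) (Finsupp.mem_support_iff.1 hbv)
    have hmem : a * b ∈ (g * h).coeff.support := by
      rw [← h1, h2]; exact Finsupp.mem_support_iff.2 hne
    obtain ⟨a', ha'g, b', hb'h, heq⟩ := exists_split g h hmem
    obtain ⟨hae, hbe⟩ := split_unique hAB (huA a hau) (hgA a' ha'g)
      (hvB b hbv) (hhB b' hb'h) heq
    subst hae; subst hbe
    refine ⟨ha'g, hb'h, ?_⟩
    rw [← hcoef, h2.symm.trans h1]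
    exact (coeff_mul_disj hAB g h hgA hhB (hgA a ha'g) (hhB b hb'h)).symm
  obtain ⟨a0, ha0⟩ := supp_nonempty_of_deg_pos hg
  obtain ⟨b0, hb0⟩ := supp_nonempty_of_deg_pos hh
  obtain ⟨ha0u, hb0v, hE0⟩ := key1 a0 ha0 b0 hb0
  have hga0 : g.coeff a0 ≠ 0 := Finsupp.mem_support_iff.1 ha0
  have hhb0 : h.coeff b0 ≠ 0 := Finsupp.mem_support_iff.1 hb0
  have hua0 : u.coeff a0 ≠ 0 := Finsupp.mem_support_iff.1 ha0u
  have hvb0 : v.coeff b0 ≠ 0 := Finsupp.mem_support_iff.1 hb0v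
  refine ⟨g.coeff a0 * (u.coeff a0)⁻¹, h.coeff b0 * (v.coeff b0)⁻¹,
    mul_ne_zero hga0 (inv_ne_zero hua0), mul_ne_zero hhb0 (inv_ne_zero hvb0), ?_, ?_⟩
  · ext m
    rw [MonoidAlgebra.coeff_smul_apply, smul_eq_mul]
    by_cases hmu : m ∈ u.coeff.support
    · obtain ⟨hmg, _, hE⟩ := key2 m hmu b0 hb0v
      have goal' : g.coeff m * u.coeff a0 * h.coeff b0 = g.coeff a0 * u.coeff m * h.coeff b0 := by
        linear_combination u.coeff a0 * hE - u.coeff m * hE0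
      have := mul_right_cancel₀ hhb0 goal'
      field_simp
      linear_combination this
    · have hum : u.coeff m = 0 := Finsupp.notMem_support_iff.1 hmu
      have hgm : g.coeff m = 0 := by
        by_contra hc
        exact hmu (key1 m (Finsupp.mem_support_iff.2 hc) b0 hb0).1
      rw [hum, hgm, mul_zero]
  · ext m
    rw [MonoidAlgebra.coeff_smul_apply, smul_eq_mul]
    by_cases hmv : m ∈ v.coeff.support
    · obtain ⟨_, hmh, hE⟩ := key2 a0 ha0u m hmv
      have goal' : h.coeff m * v.coeff b0 * g.coeff a0 = h.coeff b0 * v.coeff m * g.coeff a0 := by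
        linear_combination v.coeff b0 * hE - v.coeff m * hE0
      have := mul_right_cancel₀ hga0 goal'
      field_simp
      linear_combination this
    · have hvm : v.coeff m = 0 := Finsupp.notMem_support_iff.1 hmv
      have hhm : h.coeff m = 0 := by
        by_contra hc
        exact hmv (key1 a0 ha0 m (Finsupp.mem_support_iff.2 hc)).2.1
      rw [hvm, hhm, mul_zero]
end

section
/- If f ∈ F⟨X⟩ is multilinear (every variable occurs at most once in every nonzero monomial) and f = g·h is any nontrivial factorization, then Var(g) ∩ Var(h) = ∅. -/
theorem stmt8 {F X : Type} [Field F] (f g h : MonoidAlgebra F (FreeMonoid X))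
    (hml : ∀ m ∈ f.coeff.support, (FreeMonoid.toList m).Nodup)
    (hfact : f = g * h) (hg : 0 < deg g) (hh : 0 < deg h) :
    vars g ∩ vars h = ∅ := by
  classical
  ext x
  simp only [Set.mem_inter_iff, Set.mem_empty_iff_false, iff_false, not_and]
  rintro ⟨a, ha, hxa⟩ ⟨b, hb, hxb⟩
  set cnt : FreeMonoid X → ℕ := fun m => (FreeMonoid.toList m).count x with hcnt
  have cnt_mul : ∀ u v : FreeMonoid X, cnt (u * v) = cnt u + cnt v := by
    intro u v
    simp [hcnt, FreeMonoid.toList_mul, List.count_append]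
  set i := g.coeff.support.sup cnt with hi
  set j := h.coeff.support.sup cnt with hj
  have hia : 1 ≤ cnt a := by
    simpa [hcnt, List.count_pos_iff] using hxa
  have hjb : 1 ≤ cnt b := by
    simpa [hcnt, List.count_pos_iff] using hxb
  have hi1 : 1 ≤ i := le_trans hia (Finset.le_sup ha)
  have hj1 : 1 ≤ j := le_trans hjb (Finset.le_sup hb)
  set G : MonoidAlgebra F (FreeMonoid X) := MonoidAlgebra.ofCoeff (Finsupp.filter (fun m => cnt m = i) g.coeff) with hG
  set H : MonoidAlgebra F (FreeMonoid X) := MonoidAlgebra.ofCoeff (Finsupp.filter (fun m => cnt m = j) h.coeff) with hH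
  have hG0 : G ≠ 0 := by
    obtain ⟨m, hm, hme⟩ := Finset.exists_mem_eq_sup g.coeff.support ⟨a, ha⟩ cnt
    intro h0
    have : G.coeff m = 0 := by rw [h0]; rfl
    rw [hG, MonoidAlgebra.coeff_ofCoeff, Finsupp.filter_apply] at this
    simp [← hme] at this
    exact (Finsupp.mem_support_iff.mp hm) (this hi.symm)
  have hH0 : H ≠ 0 := by
    obtain ⟨m, hm, hme⟩ := Finset.exists_mem_eq_sup h.coeff.support ⟨b, hb⟩ cnt
    intro h0
    have : H.coeff m = 0 := by rw [h0]; rfl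
    rw [hH, MonoidAlgebra.coeff_ofCoeff, Finsupp.filter_apply] at this
    simp [← hme] at this
    exact (Finsupp.mem_support_iff.mp hm) (this hj.symm)
  have hGH : G * H ≠ 0 := mul_ne_zero hG0 hH0
  obtain ⟨w, hw⟩ : ∃ w, (G * H).coeff w ≠ 0 := by
    by_contra hc
    push_neg at hc
    exact hGH (MonoidAlgebra.ext (Finsupp.ext hc))
  have hwsupp : w ∈ (G * H).coeff.support := Finsupp.mem_support_iff.mpr hw
  have hwmem := MonoidAlgebra.support_coeff_mul_subset G H hwsupp
  obtain ⟨a', ha', b', hb', hab⟩ := Finset.mem_mul.mp hwmem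
  have ha'i : cnt a' = i := by
    have := Finsupp.mem_support_iff.mp ha'
    rw [hG, MonoidAlgebra.coeff_ofCoeff, Finsupp.filter_apply] at this
    by_contra hne; simp [hne] at this
  have hb'j : cnt b' = j := by
    have := Finsupp.mem_support_iff.mp hb'
    rw [hH, MonoidAlgebra.coeff_ofCoeff, Finsupp.filter_apply] at this
    by_contra hne; simp [hne] at this
  have hcw : cnt w = i + j := by
    rw [← hab, cnt_mul, ha'i, hb'j]
  -- expand products as sums over products of supports
  have expand : ∀ u v : MonoidAlgebra F (FreeMonoid X),
      (u * v).coeff w = ∑ p ∈ u.coeff.support ×ˢ v.coeff.support,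
        if p.1 * p.2 = w then u.coeff p.1 * v.coeff p.2 else 0 := by
    intro u v
    rw [MonoidAlgebra.coeff_mul, Finsupp.sum, Finset.sum_product]
    exact Finset.sum_congr rfl fun a _ => by rw [Finsupp.sum]
  have hsubG : G.coeff.support ⊆ g.coeff.support := by
    rw [hG, MonoidAlgebra.coeff_ofCoeff, Finsupp.support_filter]; exact Finset.filter_subset _ _
  have hsubH : H.coeff.support ⊆ h.coeff.support := by
    rw [hH, MonoidAlgebra.coeff_ofCoeff, Finsupp.support_filter]; exact Finset.filter_subset _ _
  have key : (g * h).coeff w = (G * H).coeff w := by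
    rw [expand, expand]
    have hext : ∑ p ∈ G.coeff.support ×ˢ H.coeff.support, (if p.1 * p.2 = w then G.coeff p.1 * H.coeff p.2 else 0)
        = ∑ p ∈ g.coeff.support ×ˢ h.coeff.support, (if p.1 * p.2 = w then G.coeff p.1 * H.coeff p.2 else 0) :=
      Finset.sum_subset (Finset.product_subset_product hsubG hsubH)
        (by
          intro p hp hpn
          by_cases h1 : p.1 ∈ G.coeff.support
          · have h2 : p.2 ∉ H.coeff.support := fun h2 => hpn (Finset.mem_product.mpr ⟨h1, h2⟩)
            have : H.coeff p.2 = 0 := Finsupp.notMem_support_iff.mp h2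
            simp [this]
          · have : G.coeff p.1 = 0 := Finsupp.notMem_support_iff.mp h1
            simp [this])
    rw [hext]
    refine Finset.sum_congr rfl fun p hp => ?_
    rcases Finset.mem_product.mp hp with ⟨hp1, hp2⟩
    by_cases hpw : p.1 * p.2 = w
    · have hsum : cnt p.1 + cnt p.2 = i + j := by
        rw [← cnt_mul, hpw, hcw]
      have hle1 : cnt p.1 ≤ i := Finset.le_sup hp1
      have hle2 : cnt p.2 ≤ j := Finset.le_sup hp2
      have he1 : cnt p.1 = i := by omega
      have he2 : cnt p.2 = j := by omega
      simp [hpw, hG, hH, MonoidAlgebra.coeff_ofCoeff, Finsupp.filter_apply, he1, he2]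
    · simp [hpw]
  have hfw : f.coeff w ≠ 0 := by rw [hfact, key]; exact hw
  have hwf : w ∈ f.coeff.support := Finsupp.mem_support_iff.mpr hfw
  have hnd := hml w hwf
  have hle := List.nodup_iff_count_le_one.mp hnd x
  have : cnt w ≤ 1 := hle
  omega
end

section
/- Every multilinear polynomial in F⟨X⟩ has a unique factorization into irreducible polynomials, up to nonzero scalar multiples of the factors. -/
namespace Stmt9Aux

section Ord
variable {X : Type} [LinearOrder X]

lemma lex_append_left {u v : List X} (h : List.Lex (·<·) u v) (w : List X) :
    List.Lex (·<·) (w ++ u) (w ++ v) := by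
  induction w with
  | nil => exact h
  | cons a w ih => exact List.Lex.cons ih

lemma lex_append_right : ∀ {u v : List X}, List.Lex (·<·) u v → u.length = v.length →
    ∀ w : List X, List.Lex (·<·) (u ++ w) (v ++ w)
  | _, _, List.Lex.rel h, _, w => List.Lex.rel h
  | _, _, List.Lex.cons h, hl, w =>
      List.Lex.cons (lex_append_right h (by simpa using hl) w)
  | _, _, List.Lex.nil, hl, _ => by simp at hl

/-- lex key: (φ-value, length, word). -/
def key (φ : FreeMonoid X → ℕ) (u : FreeMonoid X) : ℕ ×ₗ (ℕ ×ₗ (List X)) :=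
  toLex (φ u, toLex (u.length, FreeMonoid.toList u))

omit [LinearOrder X] in
lemma key_injective (φ : FreeMonoid X → ℕ) {u v : FreeMonoid X}
    (h : key φ u = key φ v) : u = v := by
  have h3 : FreeMonoid.toList u = FreeMonoid.toList v := congrArg (fun z => (ofLex (ofLex z).2).2) h
  exact FreeMonoid.toList.injective h3

lemma key_mul_left (φ : FreeMonoid X → ℕ) (hφ : ∀ u v, φ (u * v) = φ u + φ v)
    {u v : FreeMonoid X} (h : key φ u < key φ v) (w : FreeMonoid X) :
    key φ (w * u) < key φ (w * v) := by
  rw [key, key, Prod.Lex.lt_iff] at h ⊢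
  simp only [hφ, FreeMonoid.length_mul, FreeMonoid.toList_mul, ofLex_toLex] at *
  rcases h with h | ⟨h1, h2⟩
  · exact Or.inl (by omega)
  · refine Or.inr ⟨by omega, ?_⟩
    simp only [Prod.Lex.lt_iff, ofLex_toLex] at h2 ⊢
    rcases h2 with h2 | ⟨h2a, h2b⟩
    · exact Or.inl (by omega)
    · exact Or.inr ⟨by omega, lex_append_left h2b _⟩

lemma key_mul_right (φ : FreeMonoid X → ℕ) (hφ : ∀ u v, φ (u * v) = φ u + φ v)
    {u v : FreeMonoid X} (h : key φ u < key φ v) (w : FreeMonoid X) :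
    key φ (u * w) < key φ (v * w) := by
  rw [key, key, Prod.Lex.lt_iff] at h ⊢
  simp only [hφ, FreeMonoid.length_mul, FreeMonoid.toList_mul, ofLex_toLex] at *
  rcases h with h | ⟨h1, h2⟩
  · exact Or.inl (by omega)
  · refine Or.inr ⟨by omega, ?_⟩
    simp only [Prod.Lex.lt_iff, ofLex_toLex] at h2 ⊢
    rcases h2 with h2 | ⟨h2a, h2b⟩
    · exact Or.inl (by omega)
    · exact Or.inr ⟨by omega, lex_append_right h2b h2a _⟩

lemma key_fst_le {φ : FreeMonoid X → ℕ} {u v : FreeMonoid X} (h : key φ u ≤ key φ v) :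
    φ u ≤ φ v := by
  rcases lt_or_eq_of_le h with h | h
  · rw [key, key, Prod.Lex.lt_iff] at h
    rcases h with h | ⟨h, _⟩
    · exact le_of_lt h
    · exact le_of_eq h
  · exact le_of_eq (congrArg (fun z => (ofLex z).1) h)

end Ord

variable {F X : Type} [Field F]

lemma mul_apply_unique (p q : MonoidAlgebra F (FreeMonoid X)) {a b : FreeMonoid X}
    (ha : a ∈ p.coeff.support) (hb : b ∈ q.coeff.support)
    (huniq : ∀ a' ∈ p.coeff.support, ∀ b' ∈ q.coeff.support, a' * b' = a * b → a' = a ∧ b' = b) :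
    (p * q).coeff (a * b) = p.coeff a * q.coeff b := by
  classical
  rw [MonoidAlgebra.coeff_mul, Finsupp.sum, Finset.sum_eq_single a]
  · rw [Finsupp.sum, Finset.sum_eq_single b]
    · simp
    · intro b' hb' hne
      rw [if_neg]
      intro h
      exact hne (huniq a ha b' hb' h).2
    · intro h; exact absurd hb h
  · intro a' ha' hne
    rw [Finsupp.sum]
    apply Finset.sum_eq_zero
    intro b' hb'
    rw [if_neg]
    intro h
    exact hne (huniq a' ha' b' hb' h).1
  · intro h; exact absurd ha h

lemma mul_apply_eq_zero (p q : MonoidAlgebra F (FreeMonoid X)) {x : FreeMonoid X}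
    (h : ∀ a ∈ p.coeff.support, ∀ b ∈ q.coeff.support, a * b ≠ x) : (p * q).coeff x = 0 := by
  classical
  by_contra hx
  have hmem : x ∈ (p * q).coeff.support := Finsupp.mem_support_iff.2 hx
  have := MonoidAlgebra.support_coeff_mul_subset p q hmem
  rw [Finset.mem_mul] at this
  obtain ⟨a, ha, b, hb, hab⟩ := this
  exact h a ha b hb hab

lemma exists_good_pair (φ : FreeMonoid X → ℕ) (hφ : ∀ u v, φ (u * v) = φ u + φ v)
    (p q : MonoidAlgebra F (FreeMonoid X)) (hp : p ≠ 0) (hq : q ≠ 0) :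
    ∃ a ∈ p.coeff.support, ∃ b ∈ q.coeff.support, (p * q).coeff (a * b) = p.coeff a * q.coeff b ∧
      φ a = p.coeff.support.sup φ ∧ φ b = q.coeff.support.sup φ := by
  letI : DecidableRel (@WellOrderingRel X) := Classical.decRel _
  letI : LinearOrder X := linearOrderOfSTO WellOrderingRel
  obtain ⟨a, ha, hamax⟩ :=
    Finset.exists_max_image p.coeff.support (key φ) (Finsupp.support_nonempty_iff.2 (mt MonoidAlgebra.coeff_eq_zero.1 hp))
  obtain ⟨b, hb, hbmax⟩ :=
    Finset.exists_max_image q.coeff.support (key φ) (Finsupp.support_nonempty_iff.2 (mt MonoidAlgebra.coeff_eq_zero.1 hq))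
  have huniq : ∀ a' ∈ p.coeff.support, ∀ b' ∈ q.coeff.support, a' * b' = a * b → a' = a ∧ b' = b := by
    intro a' ha' b' hb' heq
    have hkab : key φ (a' * b') ≤ key φ (a * b') := by
      rcases eq_or_lt_of_le (hamax a' ha') with h | h
      · exact le_of_eq (by rw [key_injective φ h])
      · exact le_of_lt (key_mul_right φ hφ h b')
    have hkb : key φ (a * b') ≤ key φ (a * b) := by
      rcases eq_or_lt_of_le (hbmax b' hb') with h | h
      · exact le_of_eq (by rw [key_injective φ h])
      · exact le_of_lt (key_mul_left φ hφ h a)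
    have hk : key φ (a' * b') = key φ (a * b) := by rw [heq]
    have h1 : key φ (a * b') = key φ (a * b) := le_antisymm hkb (hk ▸ hkab)
    have hb'b : b' = b := mul_left_cancel (key_injective φ h1)
    subst hb'b
    refine ⟨?_, rfl⟩
    have h2 : key φ (a' * b') = key φ (a * b') := le_antisymm hkab (h1 ▸ hk ▸ le_refl _)
    exact mul_right_cancel (key_injective φ h2)
  refine ⟨a, ha, b, hb, mul_apply_unique p q ha hb huniq, ?_, ?_⟩
  · exact le_antisymm (Finset.le_sup ha) (Finset.sup_le fun m hm => key_fst_le (hamax m hm))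
  · exact le_antisymm (Finset.le_sup hb) (Finset.sup_le fun m hm => key_fst_le (hbmax m hm))

lemma sup_support_mul (φ : FreeMonoid X → ℕ) (hφ : ∀ u v, φ (u * v) = φ u + φ v)
    {p q : MonoidAlgebra F (FreeMonoid X)} (hp : p ≠ 0) (hq : q ≠ 0) :
    (p * q).coeff.support.sup φ = p.coeff.support.sup φ + q.coeff.support.sup φ := by
  classical
  obtain ⟨a, ha, b, hb, hcoef, hsa, hsb⟩ := exists_good_pair φ hφ p q hp hq
  apply le_antisymm
  · apply Finset.sup_le
    intro w hw
    have := MonoidAlgebra.support_coeff_mul_subset p q hw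
    rw [Finset.mem_mul] at this
    obtain ⟨u, hu, v, hv, huv⟩ := this
    rw [← huv, hφ]
    exact add_le_add (Finset.le_sup hu) (Finset.le_sup hv)
  · have hne : (p * q).coeff (a * b) ≠ 0 := by
      rw [hcoef]
      exact mul_ne_zero (Finsupp.mem_support_iff.1 ha) (Finsupp.mem_support_iff.1 hb)
    have hmem : a * b ∈ (p * q).coeff.support := Finsupp.mem_support_iff.2 hne
    calc p.coeff.support.sup φ + q.coeff.support.sup φ = φ (a * b) := by rw [hφ, hsa, hsb]
    _ ≤ (p * q).coeff.support.sup φ := Finset.le_sup hmem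

lemma mul_ne_zero' {p q : MonoidAlgebra F (FreeMonoid X)} (hp : p ≠ 0) (hq : q ≠ 0) :
    p * q ≠ 0 := by
  obtain ⟨a, ha, b, hb, hcoef, -, -⟩ :=
    exists_good_pair (fun _ => 0) (fun _ _ => rfl) p q hp hq
  intro h0
  rw [h0] at hcoef
  exact mul_ne_zero (Finsupp.mem_support_iff.1 ha) (Finsupp.mem_support_iff.1 hb)
    hcoef.symm

lemma ne_zero_of_deg_pos {p : MonoidAlgebra F (FreeMonoid X)} (h : 0 < deg p) : p ≠ 0 := by
  intro h0
  rw [h0] at h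
  simp [deg] at h

lemma deg_mul {p q : MonoidAlgebra F (FreeMonoid X)} (hp : p ≠ 0) (hq : q ≠ 0) :
    deg (p * q) = deg p + deg q :=
  sup_support_mul FreeMonoid.length (fun u v => FreeMonoid.length_mul u v) hp hq

lemma deg_smul {c : F} (hc : c ≠ 0) (p : MonoidAlgebra F (FreeMonoid X)) :
    deg (c • p) = deg p := by
  unfold deg
  rw [MonoidAlgebra.coeff_smul, Finsupp.support_smul_eq hc]

lemma deg_one : deg (1 : MonoidAlgebra F (FreeMonoid X)) = 0 := by
  apply Nat.le_antisymm _ (Nat.zero_le _)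
  apply Finset.sup_le
  intro m hm
  have := Finsupp.support_single_subset hm
  rw [Finset.mem_singleton] at this
  subst this
  simp [FreeMonoid.length_one]

lemma eq_smul_one_of_deg_zero {q : MonoidAlgebra F (FreeMonoid X)} (h : deg q = 0) :
    q = q.coeff 1 • (1 : MonoidAlgebra F (FreeMonoid X)) := by
  classical
  have hsupp : ∀ m ∈ q.coeff.support, m = (1 : FreeMonoid X) := by
    intro m hm
    have : FreeMonoid.length m ≤ 0 := h ▸ Finset.le_sup hm
    exact FreeMonoid.length_eq_zero.1 (Nat.le_zero.1 this)
  ext m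
  by_cases hm : m = 1
  · subst hm
    simp [MonoidAlgebra.one_def]
  · have h1 : q.coeff m = 0 := by
      by_contra hq
      exact hm (hsupp m (Finsupp.mem_support_iff.2 hq))
    rw [h1]
    simp [MonoidAlgebra.one_def, Finsupp.single_apply, Ne.symm hm]

/-- max count of x in monomials -/
noncomputable def mc (x : X) (p : MonoidAlgebra F (FreeMonoid X)) : ℕ :=
  letI := Classical.decEq X
  p.coeff.support.sup (fun m => (FreeMonoid.toList m).count x)

lemma mc_mul (x : X) {p q : MonoidAlgebra F (FreeMonoid X)} (hp : p ≠ 0) (hq : q ≠ 0) :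
    mc x (p * q) = mc x p + mc x q := by
  letI := Classical.decEq X
  exact sup_support_mul _ (fun u v => by
    show ((FreeMonoid.toList (u * v)).count x) = _
    rw [FreeMonoid.toList_mul, List.count_append]) hp hq

def ML (p : MonoidAlgebra F (FreeMonoid X)) : Prop :=
  ∀ m ∈ p.coeff.support, (FreeMonoid.toList m).Nodup

lemma mc_le_one_of_ml {p : MonoidAlgebra F (FreeMonoid X)} (h : ML p) (x : X) :
    mc x p ≤ 1 := by
  letI := Classical.decEq X
  apply Finset.sup_le
  intro m hm
  exact List.nodup_iff_count_le_one.1 (h m hm) x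

lemma ml_of_mc {p : MonoidAlgebra F (FreeMonoid X)} (h : ∀ x, mc x p ≤ 1) : ML p := by
  letI := Classical.decEq X
  intro m hm
  rw [List.nodup_iff_count_le_one]
  intro x
  calc (FreeMonoid.toList m).count x ≤ mc x p := Finset.le_sup hm
  _ ≤ 1 := h x

lemma one_le_mc_of_mem_vars {p : MonoidAlgebra F (FreeMonoid X)} {x : X} (h : x ∈ vars p) :
    1 ≤ mc x p := by
  letI := Classical.decEq X
  obtain ⟨m, hm, hx⟩ := h
  calc 1 ≤ (FreeMonoid.toList m).count x := (List.one_le_count_iff).2 hx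
  _ ≤ mc x p := Finset.le_sup hm

lemma ml_factors {p q : MonoidAlgebra F (FreeMonoid X)} (hml : ML (p * q))
    (hp : p ≠ 0) (hq : q ≠ 0) :
    ML p ∧ ML q ∧ (∀ x, x ∈ vars p → x ∈ vars q → False) := by
  have hkey : ∀ x : X, mc x p + mc x q ≤ 1 := by
    intro x
    rw [← mc_mul x hp hq]
    exact mc_le_one_of_ml hml x
  refine ⟨ml_of_mc fun x => le_trans (Nat.le_add_right _ _) (hkey x),
    ml_of_mc fun x => le_trans (Nat.le_add_left _ _) (hkey x), ?_⟩
  intro x h1 h2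
  have := hkey x
  have := one_le_mc_of_mem_vars h1
  have := one_le_mc_of_mem_vars h2
  omega

lemma letters_mem_vars {p : MonoidAlgebra F (FreeMonoid X)} :
    ∀ m ∈ p.coeff.support, ∀ x ∈ FreeMonoid.toList m, x ∈ vars p :=
  fun m hm x hx => ⟨m, hm, hx⟩

lemma middle_nil {A B : Set X} (hAB : ∀ x, x ∈ A → x ∈ B → False) {m : List X}
    (h1 : ∀ x ∈ m, x ∈ A) (h2 : ∀ x ∈ m, x ∈ B) : m = [] := by
  cases m with
  | nil => rfl
  | cons a l => exact absurd (h1 a (by simp)) (fun hA => hAB a hA (h2 a (by simp)))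

lemma pair_unique {A B : Set X} (hAB : ∀ x, x ∈ A → x ∈ B → False)
    {a b a' b' : FreeMonoid X}
    (haA : ∀ x ∈ FreeMonoid.toList a, x ∈ A) (ha'A : ∀ x ∈ FreeMonoid.toList a', x ∈ A)
    (hbB : ∀ x ∈ FreeMonoid.toList b, x ∈ B) (hb'B : ∀ x ∈ FreeMonoid.toList b', x ∈ B)
    (heq : a' * b' = a * b) : a' = a ∧ b' = b := by
  have hl : FreeMonoid.toList a' ++ FreeMonoid.toList b' =
      FreeMonoid.toList a ++ FreeMonoid.toList b := by
    rw [← FreeMonoid.toList_mul, ← FreeMonoid.toList_mul, heq]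
  rw [List.append_eq_append_iff] at hl
  rcases hl with ⟨m, hm1, hm2⟩ | ⟨m, hm1, hm2⟩
  · have hmA : ∀ x ∈ m, x ∈ A := fun x hx => haA x (hm1 ▸ List.mem_append_right _ hx)
    have hmB : ∀ x ∈ m, x ∈ B := fun x hx => hb'B x (hm2 ▸ List.mem_append_left _ hx)
    have : m = [] := middle_nil hAB hmA hmB
    subst this
    simp only [List.append_nil] at hm1 hm2
    exact ⟨FreeMonoid.toList.injective hm1.symm, FreeMonoid.toList.injective hm2⟩
  · have hmA : ∀ x ∈ m, x ∈ A := fun x hx => ha'A x (hm1 ▸ List.mem_append_right _ hx)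
    have hmB : ∀ x ∈ m, x ∈ B := fun x hx => hbB x (hm2 ▸ List.mem_append_left _ hx)
    have : m = [] := middle_nil hAB hmA hmB
    subst this
    simp only [List.append_nil] at hm1 hm2
    exact ⟨FreeMonoid.toList.injective hm1, FreeMonoid.toList.injective hm2.symm⟩

lemma split_prefix {A B A' B' : Set X} (hA'B' : ∀ x, x ∈ A' → x ∈ B' → False)
    (hAA' : A ⊆ A')
    {u v u' v' : FreeMonoid X}
    (hu : ∀ x ∈ FreeMonoid.toList u, x ∈ A) (hv : ∀ x ∈ FreeMonoid.toList v, x ∈ B)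
    (hu' : ∀ x ∈ FreeMonoid.toList u', x ∈ A') (hv' : ∀ x ∈ FreeMonoid.toList v', x ∈ B')
    (heq : u * v = u' * v') :
    ∃ s : FreeMonoid X, u' = u * s ∧ v = s * v' ∧
      (∀ x ∈ FreeMonoid.toList s, x ∈ A' ∧ x ∈ B) := by
  have hl : FreeMonoid.toList u ++ FreeMonoid.toList v =
      FreeMonoid.toList u' ++ FreeMonoid.toList v' := by
    rw [← FreeMonoid.toList_mul, ← FreeMonoid.toList_mul, heq]
  rw [List.append_eq_append_iff] at hl
  rcases hl with ⟨m, hm1, hm2⟩ | ⟨m, hm1, hm2⟩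
  · refine ⟨FreeMonoid.ofList m, FreeMonoid.toList.injective (by simpa using hm1),
      FreeMonoid.toList.injective (by simpa using hm2), fun x hx => ?_⟩
    have hx' : x ∈ (m : List X) := hx
    exact ⟨hu' x (hm1 ▸ List.mem_append_right _ hx'), hv x (hm2 ▸ List.mem_append_left _ hx')⟩
  · have hmA' : ∀ x ∈ m, x ∈ A' := fun x hx => hAA' (hu x (hm1 ▸ List.mem_append_right _ hx))
    have hmB' : ∀ x ∈ m, x ∈ B' := fun x hx => hv' x (hm2 ▸ List.mem_append_left _ hx)
    have hm0 : m = [] := middle_nil hA'B' hmA' hmB'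
    subst hm0
    simp only [List.append_nil] at hm1 hm2
    refine ⟨1, ?_, ?_, by simp [FreeMonoid.toList_one]⟩
    · rw [mul_one]; exact FreeMonoid.toList.injective hm1.symm
    · rw [one_mul]; exact (FreeMonoid.toList.injective (by simpa using hm2)).symm

lemma mul_apply_sets {p q : MonoidAlgebra F (FreeMonoid X)} {A B : Set X}
    (hAB : ∀ x, x ∈ A → x ∈ B → False)
    (hpA : ∀ m ∈ p.coeff.support, ∀ x ∈ FreeMonoid.toList m, x ∈ A)
    (hqB : ∀ m ∈ q.coeff.support, ∀ x ∈ FreeMonoid.toList m, x ∈ B)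
    {a b : FreeMonoid X} (ha : a ∈ p.coeff.support) (hb : b ∈ q.coeff.support) :
    (p * q).coeff (a * b) = p.coeff a * q.coeff b :=
  mul_apply_unique p q ha hb (fun a' ha' b' hb' heq =>
    pair_unique hAB (hpA a ha) (hpA a' ha') (hqB b hb) (hqB b' hb') heq)

lemma mem_support_mul_sets {p q : MonoidAlgebra F (FreeMonoid X)} {A B : Set X}
    (hAB : ∀ x, x ∈ A → x ∈ B → False)
    (hpA : ∀ m ∈ p.coeff.support, ∀ x ∈ FreeMonoid.toList m, x ∈ A)
    (hqB : ∀ m ∈ q.coeff.support, ∀ x ∈ FreeMonoid.toList m, x ∈ B)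
    {w : FreeMonoid X} :
    w ∈ (p * q).coeff.support ↔ ∃ a ∈ p.coeff.support, ∃ b ∈ q.coeff.support, w = a * b := by
  classical
  constructor
  · intro hw
    have := MonoidAlgebra.support_coeff_mul_subset p q hw
    rw [Finset.mem_mul] at this
    obtain ⟨a, ha, b, hb, hab⟩ := this
    exact ⟨a, ha, b, hb, hab.symm⟩
  · rintro ⟨a, ha, b, hb, rfl⟩
    rw [Finsupp.mem_support_iff, mul_apply_sets hAB hpA hqB ha hb]
    exact mul_ne_zero (Finsupp.mem_support_iff.1 ha) (Finsupp.mem_support_iff.1 hb)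

lemma cross_positions {la lb lc ld : List X} (heq : la ++ lb = lc ++ ld)
    {x y : X} (hx1 : x ∈ la) (hx2 : x ∉ lc) (hy1 : y ∈ lc) (hy2 : y ∉ la) : False := by
  rw [List.append_eq_append_iff] at heq
  rcases heq with ⟨m, hm1, -⟩ | ⟨m, hm1, -⟩
  · exact hx2 (by rw [hm1]; exact List.mem_append_left _ hx1)
  · exact hy2 (by rw [hm1]; exact List.mem_append_left _ hy1)

lemma cut_chain {f g h g' h' : MonoidAlgebra F (FreeMonoid X)}
    (hfgh : f = g * h) (hfg'h' : f = g' * h')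
    (hg0 : g ≠ 0) (hh0 : h ≠ 0) (hg'0 : g' ≠ 0) (hh'0 : h' ≠ 0)
    (dAB : ∀ x, x ∈ vars g → x ∈ vars h → False)
    (dA'B' : ∀ x, x ∈ vars g' → x ∈ vars h' → False) :
    vars g ⊆ vars g' ∨ vars g' ⊆ vars g := by
  by_contra hcon
  push_neg at hcon
  obtain ⟨h1, h2⟩ := hcon
  obtain ⟨x, hxA, hxnA'⟩ := Set.not_subset.1 h1
  obtain ⟨y, hyA', hynA⟩ := Set.not_subset.1 h2
  obtain ⟨ux, hux, hxux⟩ := hxA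
  obtain ⟨u'y, hu'y, hyu'y⟩ := hyA'
  -- find v_y ∈ supp h containing y
  obtain ⟨v'w, hv'w⟩ := Finsupp.support_nonempty_iff.2 (mt MonoidAlgebra.coeff_eq_zero.1 hh'0)
  have hw' : u'y * v'w ∈ f.coeff.support := by
    rw [hfg'h']
    exact (mem_support_mul_sets dA'B' letters_mem_vars letters_mem_vars).2
      ⟨u'y, hu'y, v'w, hv'w, rfl⟩
  have hw'gh : u'y * v'w ∈ (g * h).coeff.support := by rw [← hfgh]; exact hw'
  obtain ⟨a, ha, b, hb, hab⟩ := (mem_support_mul_sets dAB letters_mem_vars letters_mem_vars).1 hw'gh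
  have hyw : y ∈ FreeMonoid.toList (u'y * v'w) := by
    rw [FreeMonoid.toList_mul]
    exact List.mem_append_left _ hyu'y
  have hyb : y ∈ FreeMonoid.toList b := by
    rw [hab, FreeMonoid.toList_mul] at hyw
    rcases List.mem_append.1 hyw with hy | hy
    · exact absurd (letters_mem_vars a ha y hy) hynA
    · exact hy
  -- the word w1 = ux * b contains x (in g-part) and y (in h-part)
  have hw1 : ux * b ∈ f.coeff.support := by
    rw [hfgh]
    exact (mem_support_mul_sets dAB letters_mem_vars letters_mem_vars).2 ⟨ux, hux, b, hb, rfl⟩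
  have hw1' : ux * b ∈ (g' * h').coeff.support := by rw [← hfg'h']; exact hw1
  obtain ⟨u', hu', v', hv', huv'⟩ :=
    (mem_support_mul_sets dA'B' letters_mem_vars letters_mem_vars).1 hw1'
  -- list equation
  have hleq : FreeMonoid.toList ux ++ FreeMonoid.toList b =
      FreeMonoid.toList u' ++ FreeMonoid.toList v' := by
    rw [← FreeMonoid.toList_mul, ← FreeMonoid.toList_mul, huv']
  have hxnu' : x ∉ FreeMonoid.toList u' := fun hx => hxnA' (letters_mem_vars u' hu' x hx)
  have hynux : y ∉ FreeMonoid.toList ux := fun hy => hynA (letters_mem_vars ux hux y hy)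
  have hyu' : y ∈ FreeMonoid.toList u' := by
    have hyw1 : y ∈ FreeMonoid.toList (ux * b) := by
      rw [FreeMonoid.toList_mul]; exact List.mem_append_right _ hyb
    rw [huv', FreeMonoid.toList_mul] at hyw1
    rcases List.mem_append.1 hyw1 with hy | hy
    · exact hy
    · exact absurd (show y ∈ vars g' from ⟨u'y, hu'y, hyu'y⟩) (fun hA' => dA'B' y hA' (letters_mem_vars v' hv' y hy))
  exact cross_positions hleq hxux hxnu' hyu' hynux

lemma lemmaA_half {f g h g' h' : MonoidAlgebra F (FreeMonoid X)}
    (hml : ML f) (hfgh : f = g * h) (hfg'h' : f = g' * h')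
    (hdg : 0 < deg g) (hdh : 0 < deg h) (hdg' : 0 < deg g') (hdh' : 0 < deg h')
    (hsub : vars g ⊆ vars g') (hg'I : Irred g') :
    ∃ c : F, c ≠ 0 ∧ g' = c • g := by
  classical
  have hg0 : g ≠ 0 := ne_zero_of_deg_pos hdg
  have hh0 : h ≠ 0 := ne_zero_of_deg_pos hdh
  have hg'0 : g' ≠ 0 := ne_zero_of_deg_pos hdg'
  have hh'0 : h' ≠ 0 := ne_zero_of_deg_pos hdh'
  obtain ⟨-, -, dAB⟩ := ml_factors (show ML (g * h) from hfgh ▸ hml) hg0 hh0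
  obtain ⟨-, -, dA'B'⟩ := ml_factors (show ML (g' * h') from hfg'h' ▸ hml) hg'0 hh'0
  obtain ⟨v'0, hv'0mem, hv'0len⟩ :=
    Finset.exists_mem_eq_sup h'.coeff.support (Finsupp.support_nonempty_iff.2 (mt MonoidAlgebra.coeff_eq_zero.1 hh'0)) FreeMonoid.length
  set c0 := h'.coeff v'0 with hc0def
  have hc0ne : c0 ≠ 0 := Finsupp.mem_support_iff.1 hv'0mem
  set P : FreeMonoid X → Prop :=
    fun s => s * v'0 ∈ h.coeff.support ∧ ∀ x ∈ FreeMonoid.toList s, x ∈ vars g' with hPdef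
  set qf : FreeMonoid X → F := fun s => if P s then c0⁻¹ * h.coeff (s * v'0) else 0 with hqfdef
  set σ : FreeMonoid X → FreeMonoid X := fun v =>
    FreeMonoid.ofList ((FreeMonoid.toList v).take
      ((FreeMonoid.toList v).length - (FreeMonoid.toList v'0).length)) with hσdef
  have hσ : ∀ s : FreeMonoid X, σ (s * v'0) = s := by
    intro s
    rw [hσdef]
    simp only [FreeMonoid.toList_mul, List.length_append, Nat.add_sub_cancel]
    rw [List.take_left]
    exact FreeMonoid.ofList_toList s
  have hqsupp : ∀ s, qf s ≠ 0 → s ∈ h.coeff.support.image σ := by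
    intro s hs
    simp only [hqfdef] at hs
    by_cases hPs : P s
    · rw [if_pos hPs] at hs
      exact Finset.mem_image.2 ⟨s * v'0, hPs.1, hσ s⟩
    · rw [if_neg hPs] at hs
      exact absurd rfl hs
  set q : MonoidAlgebra F (FreeMonoid X) := MonoidAlgebra.ofCoeff (Finsupp.onFinset _ qf hqsupp) with hqdef
  have hq_apply : ∀ s, q.coeff s = qf s := fun s => rfl
  have hq_mem : ∀ s ∈ q.coeff.support, P s ∧ h.coeff (s * v'0) ≠ 0 := by
    intro s hs
    have hs' : qf s ≠ 0 := by
      rw [← hq_apply]; exact Finsupp.mem_support_iff.1 hs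
    simp only [hqfdef] at hs'
    by_cases hPs : P s
    · rw [if_pos hPs] at hs'
      exact ⟨hPs, fun h0 => hs' (by rw [h0, mul_zero])⟩
    · rw [if_neg hPs] at hs'
      exact absurd rfl hs'
  have hq_val : ∀ s, P s → q.coeff s = c0⁻¹ * h.coeff (s * v'0) := by
    intro s hPs
    rw [hq_apply]
    simp only [hqfdef]
    exact if_pos hPs
  have hq_mem' : ∀ s, P s → s ∈ q.coeff.support := by
    intro s hPs
    rw [Finsupp.mem_support_iff, hq_val s hPs]
    exact mul_ne_zero (inv_ne_zero hc0ne) (Finsupp.mem_support_iff.1 hPs.1)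
  have hqB : ∀ m ∈ q.coeff.support, ∀ x ∈ FreeMonoid.toList m, x ∈ vars h := by
    intro m hm x hx
    refine ⟨m * v'0, (hq_mem m hm).1.1, ?_⟩
    rw [FreeMonoid.toList_mul]
    exact List.mem_append_left _ hx
  have hqA' : ∀ m ∈ q.coeff.support, ∀ x ∈ FreeMonoid.toList m, x ∈ vars g' :=
    fun m hm x hx => (hq_mem m hm).1.2 x hx
  -- main claim : g' = g * q
  have claim : g' = g * q := by
    apply MonoidAlgebra.ext
    apply Finsupp.ext
    intro w
    by_cases hw : ∃ a ∈ g.coeff.support, ∃ b ∈ q.coeff.support, w = a * b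
    · obtain ⟨a, ha, b, hb, rfl⟩ := hw
      obtain ⟨hPb, hhb⟩ := hq_mem b hb
      have hfc : f.coeff (a * (b * v'0)) = g.coeff a * h.coeff (b * v'0) := by
        rw [hfgh]
        exact mul_apply_sets dAB letters_mem_vars letters_mem_vars ha hPb.1
      have hfmem : a * (b * v'0) ∈ f.coeff.support := by
        rw [Finsupp.mem_support_iff, hfc]
        exact mul_ne_zero (Finsupp.mem_support_iff.1 ha) hhb
      have hfmem' : a * (b * v'0) ∈ (g' * h').coeff.support := by rw [← hfg'h']; exact hfmem
      obtain ⟨u'', hu'', v'', hv'', heq2⟩ :=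
        (mem_support_mul_sets dA'B' letters_mem_vars letters_mem_vars).1 hfmem'
      obtain ⟨s, hs1, hs2, hs3⟩ := split_prefix dA'B' hsub (letters_mem_vars a ha)
        (letters_mem_vars _ hPb.1) (letters_mem_vars u'' hu'') (letters_mem_vars v'' hv'') heq2
      -- hs2 : b * v'0 = s * v''
      obtain ⟨hbs, hv''0⟩ := pair_unique dA'B' (fun x hx => (hs3 x hx).1) hPb.2
        (letters_mem_vars v'' hv'') (letters_mem_vars v'0 hv'0mem) hs2
      -- hbs : b = s, hv''0 : v'0 = v''
      have hu''w : u'' = a * b := by rw [hs1, hbs]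
      have hfc2 : f.coeff (a * (b * v'0)) = g'.coeff (a * b) * c0 := by
        rw [hfg'h', heq2, hu''w, ← hv''0]
        exact mul_apply_sets dA'B' letters_mem_vars letters_mem_vars
          (hu''w ▸ hu'') hv'0mem
      have heqc : g'.coeff (a * b) * c0 = g.coeff a * h.coeff (b * v'0) := by rw [← hfc2, hfc]
      rw [mul_apply_sets dAB letters_mem_vars hqB ha hb, hq_val b hPb]
      calc g'.coeff (a * b) = g'.coeff (a * b) * c0 * c0⁻¹ := by
            rw [mul_assoc, mul_inv_cancel₀ hc0ne, mul_one]
      _ = g.coeff a * h.coeff (b * v'0) * c0⁻¹ := by rw [heqc]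
      _ = g.coeff a * (c0⁻¹ * h.coeff (b * v'0)) := by ring
    · have hgq0 : (g * q).coeff w = 0 := by
        apply mul_apply_eq_zero
        intro a ha b hb hab
        exact hw ⟨a, ha, b, hb, hab.symm⟩
      rw [hgq0]
      by_contra hg'w
      have hwmem : w ∈ g'.coeff.support := Finsupp.mem_support_iff.2 hg'w
      have hfmem : w * v'0 ∈ f.coeff.support := by
        rw [hfg'h']
        exact (mem_support_mul_sets dA'B' letters_mem_vars letters_mem_vars).2
          ⟨w, hwmem, v'0, hv'0mem, rfl⟩
      have hfmem' : w * v'0 ∈ (g * h).coeff.support := by rw [← hfgh]; exact hfmem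
      obtain ⟨a, ha, v, hv, heq3⟩ :=
        (mem_support_mul_sets dAB letters_mem_vars letters_mem_vars).1 hfmem'
      obtain ⟨s, hs1, hs2, hs3⟩ := split_prefix dA'B' hsub (letters_mem_vars a ha)
        (letters_mem_vars v hv) (letters_mem_vars w hwmem) (letters_mem_vars v'0 hv'0mem)
        heq3.symm
      -- hs1 : w = a * s, hs2 : v = s * v'0
      have hPs : P s := ⟨hs2 ▸ hv, fun x hx => (hs3 x hx).1⟩
      exact hw ⟨a, ha, s, hq_mem' s hPs, hs1⟩
  -- conclude
  have hq0 : q ≠ 0 := by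
    intro h0
    rw [h0, mul_zero] at claim
    exact hg'0 claim
  have hdeg : deg g' = deg g + deg q := by rw [claim]; exact deg_mul hg0 hq0
  have hqdeg0 : deg q = 0 := by
    by_contra hq
    exact hg'I ⟨g, q, claim, hdg, Nat.pos_of_ne_zero hq⟩
  have hq1 : q = q.coeff 1 • (1 : MonoidAlgebra F (FreeMonoid X)) := eq_smul_one_of_deg_zero hqdeg0
  have hc1 : q.coeff 1 ≠ 0 := by
    intro h0
    rw [h0, zero_smul] at hq1
    exact hq0 hq1
  refine ⟨q.coeff 1, hc1, ?_⟩
  have hfin : g * q = q.coeff 1 • g := by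
    conv_lhs => rw [hq1]
    rw [mul_smul_comm, mul_one]
  rw [claim, hfin]

lemma lemmaA {f g h g' h' : MonoidAlgebra F (FreeMonoid X)}
    (hml : ML f) (hfgh : f = g * h) (hfg'h' : f = g' * h')
    (hdg : 0 < deg g) (hdh : 0 < deg h) (hdg' : 0 < deg g') (hdh' : 0 < deg h')
    (hgI : Irred g) (hg'I : Irred g') :
    ∃ α : F, α ≠ 0 ∧ g = α • g' := by
  have hg0 : g ≠ 0 := ne_zero_of_deg_pos hdg
  have hh0 : h ≠ 0 := ne_zero_of_deg_pos hdh
  have hg'0 : g' ≠ 0 := ne_zero_of_deg_pos hdg'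
  have hh'0 : h' ≠ 0 := ne_zero_of_deg_pos hdh'
  obtain ⟨-, -, dAB⟩ := ml_factors (show ML (g * h) from hfgh ▸ hml) hg0 hh0
  obtain ⟨-, -, dA'B'⟩ := ml_factors (show ML (g' * h') from hfg'h' ▸ hml) hg'0 hh'0
  rcases cut_chain hfgh hfg'h' hg0 hh0 hg'0 hh'0 dAB dA'B' with hsub | hsub
  · obtain ⟨c, hc, hce⟩ := lemmaA_half hml hfgh hfg'h' hdg hdh hdg' hdh' hsub hg'I
    refine ⟨c⁻¹, inv_ne_zero hc, ?_⟩
    rw [hce, smul_smul, inv_mul_cancel₀ hc, one_smul]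
  · obtain ⟨c, hc, hce⟩ := lemmaA_half hml hfg'h' hfgh hdg' hdh' hdg hdh hsub hgI
    exact ⟨c, hc, hce⟩

lemma prod_facts : ∀ L : List (MonoidAlgebra F (FreeMonoid X)),
    (∀ p ∈ L, 0 < deg p) → L.prod ≠ 0 ∧ deg L.prod = (L.map deg).sum
  | [], _ => ⟨one_ne_zero, by simp [deg_one]⟩
  | p :: t, hL => by
    obtain ⟨h1, h2⟩ := prod_facts t (fun r hr => hL r (List.mem_cons_of_mem _ hr))
    have hp0 : p ≠ 0 := ne_zero_of_deg_pos (hL p (List.mem_cons_self))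
    constructor
    · rw [List.prod_cons]
      exact mul_ne_zero' hp0 h1
    · rw [List.prod_cons, deg_mul hp0 h1, h2, List.map_cons, List.sum_cons]

lemma exists_fact : ∀ n (p : MonoidAlgebra F (FreeMonoid X)), deg p ≤ n →
    ∃ L : List (MonoidAlgebra F (FreeMonoid X)), p = L.prod ∧ ∀ r ∈ L, Irred r := by
  intro n
  induction n with
  | zero =>
    intro p hp
    refine ⟨[p], (List.prod_singleton).symm, fun r hr => ?_⟩
    rw [List.mem_singleton] at hr
    subst hr
    rintro ⟨a, b, heq, hda, hdb⟩
    have ha0 : a ≠ 0 := ne_zero_of_deg_pos hda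
    have hb0 : b ≠ 0 := ne_zero_of_deg_pos hdb
    have : deg r = deg a + deg b := by rw [heq]; exact deg_mul ha0 hb0
    omega
  | succ n ih =>
    intro p hp
    by_cases hI : Irred p
    · refine ⟨[p], (List.prod_singleton).symm, fun r hr => ?_⟩
      rw [List.mem_singleton] at hr
      subst hr
      exact hI
    · obtain ⟨a, b, heq, hda, hdb⟩ := not_not.1 hI
      have ha0 : a ≠ 0 := ne_zero_of_deg_pos hda
      have hb0 : b ≠ 0 := ne_zero_of_deg_pos hdb
      have hsum : deg p = deg a + deg b := by rw [heq]; exact deg_mul ha0 hb0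
      obtain ⟨L1, hL1, hI1⟩ := ih a (by omega)
      obtain ⟨L2, hL2, hI2⟩ := ih b (by omega)
      refine ⟨L1 ++ L2, ?_, fun r hr => ?_⟩
      · rw [List.prod_append, ← hL1, ← hL2, heq]
      · rcases List.mem_append.1 hr with hr | hr
        · exact hI1 r hr
        · exact hI2 r hr

lemma irred_smul {c : F} (hc : c ≠ 0) {p : MonoidAlgebra F (FreeMonoid X)}
    (hp : Irred p) : Irred (c • p) := by
  rintro ⟨a, b, heq, hda, hdb⟩
  refine hp ⟨c⁻¹ • a, b, ?_, ?_, hdb⟩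
  · rw [smul_mul_assoc, ← heq, smul_smul, inv_mul_cancel₀ hc, one_smul]
  · rw [deg_smul (inv_ne_zero hc)]
    exact hda

lemma deg_prod_pos {L : List (MonoidAlgebra F (FreeMonoid X))}
    (hL : ∀ p ∈ L, 0 < deg p) (hne : L ≠ []) : 0 < deg L.prod := by
  obtain ⟨w, wt, rfl⟩ := List.exists_cons_of_ne_nil hne
  obtain ⟨-, hdeg⟩ := prod_facts _ hL
  have hw := hL w (List.mem_cons_self)
  rw [hdeg, List.map_cons, List.sum_cons]
  omega

lemma lemmaU : ∀ (gs us : List (MonoidAlgebra F (FreeMonoid X))) (c : F), c ≠ 0 →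
    gs.prod = c • us.prod → ML gs.prod →
    (∀ p ∈ gs, Irred p ∧ 0 < deg p) → (∀ p ∈ us, Irred p ∧ 0 < deg p) →
    gs.length = us.length ∧ ∀ (i : ℕ) (hi : i < gs.length) (hi' : i < us.length),
      ∃ α : F, α ≠ 0 ∧ gs.get ⟨i, hi⟩ = α • us.get ⟨i, hi'⟩ := by
  intro gs
  induction gs with
  | nil =>
    intro us c hc heq _ _ hus
    cases us with
    | nil => exact ⟨rfl, fun i hi _ => absurd hi (by simp)⟩
    | cons u ut =>
      exfalso
      have hpos : ∀ p ∈ u :: ut, 0 < deg p := fun p hp => (hus p hp).2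
      obtain ⟨hne, hdeg⟩ := prod_facts (u :: ut) hpos
      have h1 : deg ((List.nil : List (MonoidAlgebra F (FreeMonoid X))).prod) = 0 := by
        rw [List.prod_nil]; exact deg_one
      rw [heq, deg_smul hc, hdeg] at h1
      have : 0 < deg u := (hus u (List.mem_cons_self)).2
      rw [List.map_cons, List.sum_cons] at h1
      omega
  | cons g gt ih =>
    intro us c hc heq hml hgs hus
    cases us with
    | nil =>
      exfalso
      have hpos : ∀ p ∈ g :: gt, 0 < deg p := fun p hp => (hgs p hp).2
      obtain ⟨hne, hdeg⟩ := prod_facts (g :: gt) hpos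
      have h1 : deg ((g :: gt).prod) = 0 := by
        rw [heq]
        rw [List.prod_nil, deg_smul hc, deg_one]
      rw [hdeg, List.map_cons, List.sum_cons] at h1
      have : 0 < deg g := (hgs g (List.mem_cons_self)).2
      omega
    | cons u ut =>
      have hgI : Irred g := (hgs g (List.mem_cons_self)).1
      have hdg : 0 < deg g := (hgs g (List.mem_cons_self)).2
      have huI : Irred u := (hus u (List.mem_cons_self)).1
      have hdu : 0 < deg u := (hus u (List.mem_cons_self)).2
      have hg0 : g ≠ 0 := ne_zero_of_deg_pos hdg
      have hu0 : u ≠ 0 := ne_zero_of_deg_pos hdu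
      have hcu0 : c • u ≠ 0 := smul_ne_zero hc hu0
      have heq1 : g * gt.prod = (c • u) * ut.prod := by
        have := heq
        rw [List.prod_cons, List.prod_cons, ← smul_mul_assoc] at this
        exact this
      by_cases hgt : gt = []
      · subst hgt
        by_cases hut : ut = []
        · subst hut
          simp only [List.prod_nil, mul_one] at heq1
          refine ⟨rfl, ?_⟩
          intro i hi hi'
          have hi0 : i = 0 := by simpa using hi
          subst hi0
          exact ⟨c, hc, heq1⟩
        · exfalso
          simp only [List.prod_nil, mul_one] at heq1
          refine hgI ⟨c • u, ut.prod, heq1, ?_, ?_⟩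
          · rw [deg_smul hc]; exact hdu
          · exact deg_prod_pos (fun p hp => (hus p (List.mem_cons_of_mem _ hp)).2) hut
      · by_cases hut : ut = []
        · exfalso
          subst hut
          simp only [List.prod_nil, mul_one] at heq1
          refine huI ⟨c⁻¹ • g, gt.prod, ?_, ?_, ?_⟩
          · rw [smul_mul_assoc, heq1, smul_smul, inv_mul_cancel₀ hc, one_smul]
          · rw [deg_smul (inv_ne_zero hc)]; exact hdg
          · exact deg_prod_pos (fun p hp => (hgs p (List.mem_cons_of_mem _ hp)).2) hgt
        · -- main case
          have hgtpos : 0 < deg gt.prod :=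
            deg_prod_pos (fun p hp => (hgs p (List.mem_cons_of_mem _ hp)).2) hgt
          have hutpos : 0 < deg ut.prod :=
            deg_prod_pos (fun p hp => (hus p (List.mem_cons_of_mem _ hp)).2) hut
          have hgt0 : gt.prod ≠ 0 := ne_zero_of_deg_pos hgtpos
          have hmlf : ML (g * gt.prod) := by
            have hml' := hml
            rw [List.prod_cons] at hml'
            exact hml'
          have hdcu : 0 < deg (c • u) := by rw [deg_smul hc]; exact hdu
          obtain ⟨α, hα, hgα⟩ := lemmaA hmlf rfl heq1 hdg hgtpos hdcu hutpos hgI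
            (irred_smul hc huI)
          have hcancel : α • gt.prod = ut.prod := by
            apply mul_left_cancel₀ hcu0
            rw [mul_smul_comm, ← smul_mul_assoc, ← hgα]
            exact heq1
          have hrec : gt.prod = α⁻¹ • ut.prod := by
            rw [← hcancel, smul_smul, inv_mul_cancel₀ hα, one_smul]
          have hmlgt : ML gt.prod := (ml_factors hmlf hg0 hgt0).2.1
          obtain ⟨hlen, hidx⟩ := ih ut α⁻¹ (inv_ne_zero hα) hrec hmlgt
            (fun p hp => hgs p (List.mem_cons_of_mem _ hp))
            (fun p hp => hus p (List.mem_cons_of_mem _ hp))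
          refine ⟨by simp [hlen], ?_⟩
          intro i hi hi'
          cases i with
          | zero =>
            refine ⟨α * c, mul_ne_zero hα hc, ?_⟩
            show g = (α * c) • u
            rw [hgα, smul_smul]
          | succ j =>
            have hj : j < gt.length := by simpa using hi
            have hj' : j < ut.length := by simpa using hi'
            obtain ⟨β, hβ, hβe⟩ := hidx j hj hj'
            exact ⟨β, hβ, hβe⟩

end Stmt9Aux

theorem stmt9 {F X : Type} [Field F] (f : MonoidAlgebra F (FreeMonoid X))
    (hml : ∀ m ∈ f.coeff.support, (FreeMonoid.toList m).Nodup) :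
    (∃ L : List (MonoidAlgebra F (FreeMonoid X)), f = L.prod ∧ ∀ p ∈ L, Irred p) ∧
    (∀ gs us : List (MonoidAlgebra F (FreeMonoid X)),
      f = gs.prod → f = us.prod →
      (∀ p ∈ gs, Irred p ∧ 0 < deg p) → (∀ p ∈ us, Irred p ∧ 0 < deg p) →
      gs.length = us.length ∧
        ∀ (i : Nat) (hi : i < gs.length) (hi' : i < us.length),
          ∃ α : F, α ≠ 0 ∧ gs.get ⟨i, hi⟩ = α • us.get ⟨i, hi'⟩) := by
  constructor
  · exact Stmt9Aux.exists_fact (deg f) f le_rfl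
  · intro gs us h1 h2 h3 h4
    exact Stmt9Aux.lemmaU gs us 1 one_ne_zero
      (by rw [← h1, ← h2, one_smul]) (h1 ▸ hml) h3 h4
end

section
/- Every homogeneous polynomial in F⟨X⟩ has a unique factorization into irreducible polynomials in F⟨X⟩, up to nonzero scalar multiples of the factors. -/
namespace Stmt11Aux

variable {F X : Type} [Field F]

local notation "R" => MonoidAlgebra F (FreeMonoid X)




def mtake (a : ℕ) (m : FreeMonoid X) : FreeMonoid X :=
  FreeMonoid.ofList ((FreeMonoid.toList m).take a)

def mdrop (a : ℕ) (m : FreeMonoid X) : FreeMonoid X :=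
  FreeMonoid.ofList ((FreeMonoid.toList m).drop a)

lemma mtake_mul_mdrop (a : ℕ) (m : FreeMonoid X) : mtake a m * mdrop a m = m := by
  apply FreeMonoid.toList.injective
  simp [mtake, mdrop, FreeMonoid.toList_mul]

lemma length_toList (m : FreeMonoid X) : (FreeMonoid.toList m).length = FreeMonoid.length m := rfl

lemma eq_take_drop {x y m : FreeMonoid X} (hxy : x * y = m) (a : ℕ)
    (hl : FreeMonoid.length x = a) : x = mtake a m ∧ y = mdrop a m := by
  subst hxy
  constructor <;> apply FreeMonoid.toList.injective <;>
    simp [mtake, mdrop, FreeMonoid.toList_mul, ← hl, ← length_toList]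

/-- Master coefficient lemma. -/
lemma master (g h : R) (m : FreeMonoid X) (a : ℕ)
    (hx : ∀ x ∈ g.coeff.support, ∀ y ∈ h.coeff.support, x * y = m → FreeMonoid.length x = a) :
    (g * h).coeff m = g.coeff (mtake a m) * h.coeff (mdrop a m) := by
  classical
  rw [MonoidAlgebra.coeff_mul]
  have step1 : (g.coeff.sum fun x gx => h.coeff.sum fun y hy => if x * y = m then gx * hy else 0)
      = g.coeff.sum fun x gx => h.coeff.sum fun y hy =>
          if x = mtake a m ∧ y = mdrop a m then gx * hy else 0 := by
    apply Finsupp.sum_congr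
    intro x hxs
    apply Finsupp.sum_congr
    intro y hys
    congr 1
    by_cases hc : x * y = m
    · have := eq_take_drop hc a (hx x hxs y hys hc)
      simp [hc, this.1, this.2, mtake_mul_mdrop]
    · have : ¬ (x = mtake a m ∧ y = mdrop a m) := by
        rintro ⟨rfl, rfl⟩; exact hc (mtake_mul_mdrop a m)
      simp [hc, this]
  rw [step1]
  have inner : ∀ c : F, (h.coeff.sum fun y hy => if y = mdrop a m then c * hy else 0)
      = c * h.coeff (mdrop a m) := by
    intro c
    rw [Finsupp.sum_ite_eq']
    split_ifs with hs
    · rfl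
    · simp [Finsupp.notMem_support_iff.mp hs]
  have step2 : (g.coeff.sum fun x gx => h.coeff.sum fun y hy =>
      if x = mtake a m ∧ y = mdrop a m then gx * hy else 0)
      = g.coeff.sum fun x gx => if x = mtake a m then gx * h.coeff (mdrop a m) else 0 := by
    apply Finsupp.sum_congr
    intro x _
    by_cases hxe : x = mtake a m
    · simp only [hxe, true_and]
      exact inner _
    · simp [hxe, Finsupp.sum]
  rw [step2, Finsupp.sum_ite_eq']
  split_ifs with hs
  · rfl
  · simp [Finsupp.notMem_support_iff.mp hs]






lemma length_le_deg {f : R} {m : FreeMonoid X} (hm : m ∈ f.coeff.support) :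
    FreeMonoid.length m ≤ deg f := Finset.le_sup hm

lemma exists_deg_witness {f : R} (hf : f ≠ 0) :
    ∃ m ∈ f.coeff.support, FreeMonoid.length m = deg f := by
  obtain ⟨m, hm, he⟩ := Finset.exists_mem_eq_sup f.coeff.support
    (Finsupp.support_nonempty_iff.mpr (by simpa using hf)) FreeMonoid.length
  exact ⟨m, hm, he.symm⟩

lemma deg_pos_ne_zero {f : R} (hf : 0 < deg f) : f ≠ 0 := by
  rintro rfl
  simp [deg] at hf

lemma homog_deg_eq {f : R} {d : ℕ} (hf : f ≠ 0) (h : Homog f d) : deg f = d := by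
  obtain ⟨m, hm, he⟩ := exists_deg_witness hf
  rw [← he, h m hm]






lemma mtake_of_prefix {x y : FreeMonoid X} : mtake (FreeMonoid.length x) (x * y) = x := by
  apply FreeMonoid.toList.injective
  show List.take _ (FreeMonoid.toList x ++ FreeMonoid.toList y) = _
  exact List.take_left' rfl

lemma mdrop_of_prefix {x y : FreeMonoid X} : mdrop (FreeMonoid.length x) (x * y) = y := by
  apply FreeMonoid.toList.injective
  show List.drop _ (FreeMonoid.toList x ++ FreeMonoid.toList y) = _
  exact List.drop_left' rfl

lemma deg_mul_le (g h : R) : deg (g * h) ≤ deg g + deg h := by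
  classical
  apply Finset.sup_le
  intro m hm
  obtain ⟨x, hx, y, hy, rfl⟩ := Finset.mem_mul.mp (MonoidAlgebra.support_coeff_mul_subset g h hm)
  rw [FreeMonoid.length_mul]
  exact Nat.add_le_add (length_le_deg hx) (length_le_deg hy)

lemma mul_apply_top {g h : R} {m : FreeMonoid X}
    (hm : FreeMonoid.length m = deg g + deg h) :
    (g * h).coeff m = g.coeff (mtake (deg g) m) * h.coeff (mdrop (deg g) m) := by
  apply master
  intro x hx y hy hxy
  have h1 := length_le_deg hx
  have h2 := length_le_deg hy
  have : FreeMonoid.length x + FreeMonoid.length y = deg g + deg h := by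
    rw [← FreeMonoid.length_mul, hxy, hm]
  omega

lemma mul_ne_zero' {g h : R} (hg : g ≠ 0) (hh : h ≠ 0) :
    g * h ≠ 0 ∧ deg (g * h) = deg g + deg h := by
  obtain ⟨m₁, hm₁, e₁⟩ := exists_deg_witness hg
  obtain ⟨m₂, hm₂, e₂⟩ := exists_deg_witness hh
  have hlen : FreeMonoid.length (m₁ * m₂) = deg g + deg h := by
    rw [FreeMonoid.length_mul, e₁, e₂]
  have hcoef : (g * h).coeff (m₁ * m₂) = g.coeff m₁ * h.coeff m₂ := by
    rw [mul_apply_top hlen, ← e₁, mtake_of_prefix, mdrop_of_prefix]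
  have hne : (g * h).coeff (m₁ * m₂) ≠ 0 := by
    rw [hcoef]
    exact mul_ne_zero (Finsupp.mem_support_iff.mp hm₁) (Finsupp.mem_support_iff.mp hm₂)
  have hmem : m₁ * m₂ ∈ (g * h).coeff.support := Finsupp.mem_support_iff.mpr hne
  constructor
  · intro h0; rw [h0] at hmem; simp at hmem
  · exact le_antisymm (deg_mul_le g h) (hlen ▸ length_le_deg hmem)

lemma prod_ne_zero {L : List R} (hL : ∀ p ∈ L, p ≠ 0) : L.prod ≠ 0 := by
  induction L with
  | nil => simp
  | cons p rest ih =>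
      rw [List.prod_cons]
      exact (mul_ne_zero' (hL p (by simp)) (ih fun q hq => hL q (by simp [hq]))).1

lemma deg_prod {L : List R} (hL : ∀ p ∈ L, p ≠ 0) :
    deg L.prod = (L.map deg).sum := by
  induction L with
  | nil => simp [deg]
  | cons p rest ih =>
      rw [List.prod_cons, (mul_ne_zero' (hL p (by simp))
        (prod_ne_zero fun q hq => hL q (by simp [hq]))).2, List.map_cons, List.sum_cons,
        ih fun q hq => hL q (by simp [hq])]





/-- product of homogeneous is homogeneous -/
lemma homog_mul {g h : R} {a b : ℕ} (hg : Homog g a) (hh : Homog h b) :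
    Homog (g * h) (a + b) := by
  classical
  intro m hm
  obtain ⟨x, hx, y, hy, rfl⟩ := Finset.mem_mul.mp (MonoidAlgebra.support_coeff_mul_subset g h hm)
  rw [FreeMonoid.length_mul, hg x hx, hh y hy]

/-- factors of a nonzero homogeneous element are homogeneous -/
lemma homog_factor {g h : R} {d : ℕ} (hg : g ≠ 0) (hh : h ≠ 0) (hf : Homog (g * h) d) :
    Homog g (deg g) ∧ Homog h (deg h) := by
  classical
  -- min-length witnesses
  obtain ⟨x₀, hx₀, hx₀min⟩ := Finset.exists_min_image g.coeff.support FreeMonoid.length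
    (Finsupp.support_nonempty_iff.mpr (by simpa using hg))
  obtain ⟨y₀, hy₀, hy₀min⟩ := Finset.exists_min_image h.coeff.support FreeMonoid.length
    (Finsupp.support_nonempty_iff.mpr (by simpa using hh))
  obtain ⟨x₁, hx₁, hx₁e⟩ := exists_deg_witness hg
  obtain ⟨y₁, hy₁, hy₁e⟩ := exists_deg_witness hh
  -- coefficient at x₀ * y₀ is g x₀ * h y₀
  have hcoefmin : (g * h).coeff (x₀ * y₀) = g.coeff x₀ * h.coeff y₀ := by
    have := master g h (x₀ * y₀) (FreeMonoid.length x₀) ?_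
    · rw [this, mtake_of_prefix, mdrop_of_prefix]
    · intro x hx y hy hxy
      have h1 := hx₀min x hx
      have h2 := hy₀min y hy
      have : FreeMonoid.length x + FreeMonoid.length y
          = FreeMonoid.length x₀ + FreeMonoid.length y₀ := by
        rw [← FreeMonoid.length_mul, hxy, FreeMonoid.length_mul]
      omega
  have hmemmin : x₀ * y₀ ∈ (g * h).coeff.support := Finsupp.mem_support_iff.mpr <| by
    rw [hcoefmin]
    exact mul_ne_zero (Finsupp.mem_support_iff.mp hx₀) (Finsupp.mem_support_iff.mp hy₀)
  have hcoefmax : (g * h).coeff (x₁ * y₁) = g.coeff x₁ * h.coeff y₁ := by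
    have := master g h (x₁ * y₁) (FreeMonoid.length x₁) ?_
    · rw [this, mtake_of_prefix, mdrop_of_prefix]
    · intro x hx y hy hxy
      have h1 := length_le_deg hx
      have h2 := length_le_deg hy
      have : FreeMonoid.length x + FreeMonoid.length y
          = FreeMonoid.length x₁ + FreeMonoid.length y₁ := by
        rw [← FreeMonoid.length_mul, hxy, FreeMonoid.length_mul]
      omega
  have hmemmax : x₁ * y₁ ∈ (g * h).coeff.support := Finsupp.mem_support_iff.mpr <| by
    rw [hcoefmax]
    exact mul_ne_zero (Finsupp.mem_support_iff.mp hx₁) (Finsupp.mem_support_iff.mp hy₁)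
  have e1 := hf _ hmemmin
  have e2 := hf _ hmemmax
  rw [FreeMonoid.length_mul] at e1 e2
  have hxe : FreeMonoid.length x₀ = deg g := by
    have := hx₀min x₁ hx₁
    have := hy₀min y₁ hy₁
    omega
  constructor
  · intro m hm
    have := hx₀min m hm
    have := length_le_deg hm
    omega
  · intro m hm
    have := hy₀min m hm
    have := length_le_deg hm
    omega

lemma homog_smul {f : R} {d : ℕ} (hf : Homog f d) (α : F) : Homog (α • f) d := by
  intro m hm
  exact hf m (Finsupp.support_smul hm)

lemma deg_smul {f : R} {α : F} (hα : α ≠ 0) : deg (α • f) = deg f := by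
  unfold deg
  rw [MonoidAlgebra.coeff_smul, Finsupp.support_smul_eq hα]

/-- homogeneous of degree 0 means scalar -/
lemma homog_zero_scalar {w : R} (hw : Homog w 0) : w = (w.coeff 1) • (1 : R) := by
  classical
  ext m
  by_cases hm : m = 1
  · subst hm
    simp [MonoidAlgebra.one_def]
  · have hms : m ∉ w.coeff.support := by
      intro hc
      exact hm (FreeMonoid.length_eq_zero.mp (hw m hc))
    rw [Finsupp.notMem_support_iff.mp hms]
    have : (1 : R).coeff m = 0 := by
      rw [MonoidAlgebra.one_def, MonoidAlgebra.coeff_single_apply, if_neg (fun hc => hm hc.symm)]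
    rw [MonoidAlgebra.coeff_smul_apply, this, smul_zero]






lemma homog_mul_apply {g h : R} {a b : ℕ} (hg : Homog g a) (_hh : Homog h b)
    (m : FreeMonoid X) : (g * h).coeff m = g.coeff (mtake a m) * h.coeff (mdrop a m) :=
  master g h m a fun x hx _y _hy _hxy => hg x hx

lemma mtake_append {a : ℕ} {p n : FreeMonoid X} (hap : a ≤ FreeMonoid.length p) :
    mtake a (p * n) = mtake a p := by
  apply FreeMonoid.toList.injective
  simp only [mtake, FreeMonoid.toList_ofList, FreeMonoid.toList_mul]
  exact List.take_append_of_le_length hap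

lemma mdrop_append {a : ℕ} {p n : FreeMonoid X} (hap : a ≤ FreeMonoid.length p) :
    mdrop a (p * n) = mdrop a p * n := by
  apply FreeMonoid.toList.injective
  simp only [mdrop, FreeMonoid.toList_ofList, FreeMonoid.toList_mul]
  exact List.drop_append_of_le_length hap

/-- Rigidity: if g·h = u·v with all factors homogeneous nonzero and deg g ≤ deg u,
then u = g·w for some homogeneous w. -/
lemma rigid {g h u v : R} {a b c e : ℕ} (hg : Homog g a) (hh : Homog h b) (hu : Homog u c)
    (hv : Homog v e) (hgne : g ≠ 0) (hhne : h ≠ 0) (hune : u ≠ 0) (hvne : v ≠ 0)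
    (heq : g * h = u * v) (hac : a ≤ c) :
    ∃ w : R, Homog w (c - a) ∧ u = g * w := by
  classical
  have hdegs : a + b = c + e := by
    have h1 := (mul_ne_zero' hgne hhne).2
    have h2 := (mul_ne_zero' hune hvne).2
    rw [homog_deg_eq hgne hg, homog_deg_eq hhne hh] at h1
    rw [homog_deg_eq hune hu, homog_deg_eq hvne hv] at h2
    rw [← h1, ← h2, heq]
  obtain ⟨n, hn⟩ := Finsupp.support_nonempty_iff.mpr (show v.coeff ≠ 0 by simpa using hvne)
  set β := v.coeff n with hβ
  have hβne : β ≠ 0 := Finsupp.mem_support_iff.mp hn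
  have hinj : Set.InjOn (· * n) ((· * n) ⁻¹' (h.coeff.support : Set (FreeMonoid X))) := fun q1 _ q2 _ hq =>
    mul_right_cancel hq
  set w : R := β⁻¹ • MonoidAlgebra.ofCoeff (Finsupp.comapDomain (· * n) h.coeff hinj) with hwdef
  have hwapp : ∀ q : FreeMonoid X, w.coeff q = β⁻¹ * h.coeff (q * n) := by
    intro q
    rw [hwdef, MonoidAlgebra.coeff_smul_apply, MonoidAlgebra.coeff_ofCoeff, Finsupp.comapDomain_apply, smul_eq_mul]
  have hne : FreeMonoid.length n = e := hv n hn
  have hwhom : Homog w (c - a) := by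
    intro q hq
    have hwq : w.coeff q ≠ 0 := Finsupp.mem_support_iff.mp hq
    rw [hwapp q] at hwq
    have : h.coeff (q * n) ≠ 0 := fun hz => hwq (by rw [hz, mul_zero])
    have := hh _ (Finsupp.mem_support_iff.mpr this)
    rw [FreeMonoid.length_mul, hne] at this
    omega
  refine ⟨w, hwhom, ?_⟩
  ext p
  rw [homog_mul_apply hg hwhom p, hwapp]
  by_cases hp : FreeMonoid.length p = c
  · have hup : u.coeff p * β = (u * v).coeff (p * n) := by
      rw [homog_mul_apply hu hv, ← hp, mtake_of_prefix, mdrop_of_prefix, hβ]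
    rw [← heq] at hup
    rw [homog_mul_apply hg hh] at hup
    have hacp : a ≤ FreeMonoid.length p := hp ▸ hac
    rw [mtake_append hacp, mdrop_append hacp] at hup
    field_simp
    rw [hup]
  · -- both sides vanish
    have h1 : u.coeff p = 0 := by
      by_contra hc
      exact hp (hu p (Finsupp.mem_support_iff.mpr hc))
    have h2 : g.coeff (mtake a p) * (β⁻¹ * h.coeff (mdrop a p * n)) = 0 := by
      have := homog_mul hg hwhom
      have hca : a + (c - a) = c := by omega
      rw [hca] at this
      have hz : (g * w).coeff p = 0 := by
        by_contra hc
        exact hp (this p (Finsupp.mem_support_iff.mpr hc))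
      rw [homog_mul_apply hg hwhom p, hwapp] at hz
      exact hz
    rw [h1, h2]



lemma deg_one : deg (1 : R) = 0 := by
  have : (1 : R) ≠ 0 := one_ne_zero
  apply homog_deg_eq this
  intro m hm
  rw [MonoidAlgebra.one_def] at hm
  have := Finsupp.support_single_subset hm
  simp only [Finset.mem_singleton] at this
  subst this
  rfl

lemma homog_deg_zero {f : R} (hf : deg f = 0) : Homog f 0 := by
  intro m hm
  have h2 : FreeMonoid.length m ≤ deg f := Finset.le_sup hm
  omega

lemma irred_smul {u : R} (h : Irred u) {α : F} (hα : α ≠ 0) : Irred (α • u) := by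
  rintro ⟨g, h', heq, hg, hh⟩
  exact h ⟨α⁻¹ • g, h', by
    rw [smul_mul_assoc]
    rw [← heq, smul_smul, inv_mul_cancel₀ hα, one_smul], by rwa [deg_smul (inv_ne_zero hα)], hh⟩

lemma mul_left_cancel' {u x y : R} (hu : u ≠ 0) (h : u * x = u * y) : x = y := by
  by_contra hne
  have hxy : x - y ≠ 0 := sub_ne_zero_of_ne hne
  have : u * (x - y) = 0 := by rw [mul_sub, h, sub_self]
  exact (mul_ne_zero' hu hxy).1 this

/-- one-sided head lemma -/
lemma head_half {g u P Q : R} (hgne : g ≠ 0) (hune : u ≠ 0) (hPne : P ≠ 0) (hQne : Q ≠ 0)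
    (hgh : Homog g (deg g)) (hPh : Homog P (deg P)) (huh : Homog u (deg u))
    (hQh : Homog Q (deg Q)) (heq : g * P = u * Q) (hiu : Irred u) (hdg : 0 < deg g)
    (hle : deg g ≤ deg u) : ∃ β : F, β ≠ 0 ∧ u = β • g := by
  obtain ⟨w, hwh, hw⟩ := rigid hgh hPh huh hQh hgne hPne hune hQne heq hle
  have hwne : w ≠ 0 := by rintro rfl; rw [mul_zero] at hw; exact hune hw
  have hdegw : deg w = 0 := by
    by_contra hc
    exact hiu ⟨g, w, hw, hdg, Nat.pos_of_ne_zero hc⟩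
  have hw0 : Homog w 0 := homog_deg_zero hdegw
  have hws := homog_zero_scalar hw0
  refine ⟨w.coeff 1, fun hz => hwne (by rw [hws, hz, zero_smul]), ?_⟩
  rw [hw]
  conv_lhs => rw [hws]
  rw [mul_smul_comm, mul_one]

lemma head_scalar {g u P Q : R} (hgne : g ≠ 0) (hune : u ≠ 0) (hPne : P ≠ 0) (hQne : Q ≠ 0)
    (hgh : Homog g (deg g)) (hPh : Homog P (deg P)) (huh : Homog u (deg u))
    (hQh : Homog Q (deg Q)) (heq : g * P = u * Q) (hig : Irred g) (hiu : Irred u)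
    (hdg : 0 < deg g) (hdu : 0 < deg u) : ∃ α : F, α ≠ 0 ∧ g = α • u := by
  rcases le_total (deg g) (deg u) with hle | hle
  · obtain ⟨β, hβ, hβe⟩ := head_half hgne hune hPne hQne hgh hPh huh hQh heq hiu hdg hle
    exact ⟨β⁻¹, inv_ne_zero hβ, by rw [hβe, smul_smul, inv_mul_cancel₀ hβ, one_smul]⟩
  · exact head_half hune hgne hQne hPne huh hQh hgh hPh heq.symm hig hdu hle

/-- comparing a scalar-modified cons list to the original at each index -/
lemma modified_get (α : F) (hα : α ≠ 0) (u₂ : R) (us'' : List R) (j : ℕ)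
    (hj : j < ((α • u₂) :: us'').length) (hj' : j < (u₂ :: us'').length) :
    ∃ γ : F, γ ≠ 0 ∧ ((α • u₂) :: us'').get ⟨j, hj⟩ = γ • (u₂ :: us'').get ⟨j, hj'⟩ := by
  cases j with
  | zero => exact ⟨α, hα, rfl⟩
  | succ k => exact ⟨1, one_ne_zero, by simp⟩

lemma main_ind (n : ℕ) : ∀ gs us : List R, gs.length = n → gs.prod = us.prod →
    (∀ p ∈ gs, Irred p ∧ 0 < deg p) → (∀ p ∈ us, Irred p ∧ 0 < deg p) →
    (∃ d, Homog gs.prod d) →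
    gs.length = us.length ∧
      ∀ (i : Nat) (hi : i < gs.length) (hi' : i < us.length),
        ∃ α : F, α ≠ 0 ∧ gs.get ⟨i, hi⟩ = α • us.get ⟨i, hi'⟩ := by
  induction n with
  | zero =>
    intro gs us hlen heq hgs hus _
    have hgsnil : gs = [] := List.length_eq_zero_iff.mp hlen
    subst hgsnil
    match us with
    | [] => exact ⟨rfl, fun i hi _ => absurd hi (by simp)⟩
    | u :: us' =>
      exfalso
      have husne : ∀ p ∈ u :: us', p ≠ 0 := fun p hp => deg_pos_ne_zero (hus p hp).2
      have h1 : deg ((u :: us').prod) = (((u :: us').map deg)).sum := deg_prod husne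
      rw [← heq, List.prod_nil, deg_one] at h1
      have := (hus u (by simp)).2
      simp [List.map_cons, List.sum_cons] at h1
      omega
  | succ n ih =>
    intro gs us hlen heq hgs hus hhom
    match gs with
    | g :: gs' =>
      match us with
      | [] =>
        exfalso
        have hgsne : ∀ p ∈ g :: gs', p ≠ 0 := fun p hp => deg_pos_ne_zero (hgs p hp).2
        have h1 : deg ((g :: gs').prod) = (((g :: gs').map deg)).sum := deg_prod hgsne
        rw [heq, List.prod_nil, deg_one] at h1
        have := (hgs g (by simp)).2
        simp [List.map_cons, List.sum_cons] at h1
        omega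
      | u :: us' =>
        -- setup
        have hgne : g ≠ 0 := deg_pos_ne_zero (hgs g (by simp)).2
        have hune : u ≠ 0 := deg_pos_ne_zero (hus u (by simp)).2
        have hPne : gs'.prod ≠ 0 := prod_ne_zero fun p hp => deg_pos_ne_zero (hgs p (by simp [hp])).2
        have hQne : us'.prod ≠ 0 := prod_ne_zero fun p hp => deg_pos_ne_zero (hus p (by simp [hp])).2
        obtain ⟨d, hd⟩ := hhom
        rw [List.prod_cons, List.prod_cons] at heq
        rw [List.prod_cons] at hd
        have hfac1 := homog_factor hgne hPne hd
        have hd' : Homog (u * us'.prod) d := heq ▸ hd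
        have hfac2 := homog_factor hune hQne hd'
        obtain ⟨α, hα, hαe⟩ := head_scalar hgne hune hPne hQne hfac1.1 hfac1.2 hfac2.1
          hfac2.2 heq (hgs g (by simp)).1 (hus u (by simp)).1 (hgs g (by simp)).2
          (hus u (by simp)).2
        -- cancel: α • gs'.prod = us'.prod
        have hcan : α • gs'.prod = us'.prod := by
          apply mul_left_cancel' hune
          rw [mul_smul_comm, ← smul_mul_assoc, ← hαe, heq]
        have hlen' : gs'.length = n := by simpa using hlen
        match us' with
        | [] =>
          -- gs' must be empty as well
          have hgs'nil : gs' = [] := by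
            match gs' with
            | [] => rfl
            | p :: rest =>
              exfalso
              have hne : ∀ q ∈ p :: rest, q ≠ 0 := fun q hq =>
                deg_pos_ne_zero (hgs q (List.mem_cons_of_mem g hq)).2
              have h1 : deg ((p :: rest).prod) = (((p :: rest).map deg)).sum := deg_prod hne
              have h2 : deg ((p :: rest).prod) = 0 := by
                have hp2 : (p :: rest).prod = α⁻¹ • (1 : R) := by
                  rw [List.prod_nil] at hcan
                  rw [← hcan, smul_smul, inv_mul_cancel₀ hα, one_smul]
                rw [hp2, deg_smul (inv_ne_zero hα), deg_one]
              rw [h1, List.map_cons, List.sum_cons] at h2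
              have := (hgs p (by simp)).2
              omega
          subst hgs'nil
          refine ⟨rfl, fun i hi hi' => ?_⟩
          have : i = 0 := by simpa using hi
          subst this
          exact ⟨α, hα, hαe⟩
        | u₂ :: us'' =>
          -- us'.prod = ((α⁻¹ • u₂) :: us'').prod ; apply ih to gs' and that list
          have hprodeq : gs'.prod = ((α⁻¹ • u₂) :: us'').prod := by
            rw [List.prod_cons, smul_mul_assoc, ← List.prod_cons, ← hcan, smul_smul,
              inv_mul_cancel₀ hα, one_smul]
          have hmod : ∀ p ∈ (α⁻¹ • u₂) :: us'', Irred p ∧ 0 < deg p := by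
            intro p hp
            rcases List.mem_cons.mp hp with rfl | hp'
            · refine ⟨irred_smul (hus u₂ (by simp)).1 (inv_ne_zero hα), ?_⟩
              rw [deg_smul (inv_ne_zero hα)]
              exact (hus u₂ (by simp)).2
            · exact hus p (by simp [hp'])
          have hgs' : ∀ p ∈ gs', Irred p ∧ 0 < deg p := fun p hp => hgs p (by simp [hp])
          have hhom' : ∃ d', Homog gs'.prod d' := ⟨deg gs'.prod, hfac1.2⟩
          obtain ⟨hlen2, hidx⟩ := ih gs' ((α⁻¹ • u₂) :: us'') hlen' hprodeq hgs' hmod hhom'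
          constructor
          · simp only [List.length_cons] at hlen2 ⊢
            omega
          · intro i hi hi'
            cases i with
            | zero => exact ⟨α, hα, hαe⟩
            | succ j =>
              have hj : j < gs'.length := by simpa using hi
              have hj' : j < ((α⁻¹ • u₂) :: us'').length := by rw [← hlen2]; exact hj
              have hj'' : j < (u₂ :: us'').length := by simpa using hj'
              obtain ⟨β, hβ, hβe⟩ := hidx j hj hj'
              obtain ⟨γ, hγ, hγe⟩ := modified_get α⁻¹ (inv_ne_zero hα) u₂ us'' j hj' hj''
              refine ⟨β * γ, mul_ne_zero hβ hγ, ?_⟩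
              show gs'.get ⟨j, hj⟩ = (β * γ) • (u₂ :: us'').get ⟨j, hj''⟩
              rw [hβe, hγe, smul_smul]



lemma exists_fact (n : ℕ) : ∀ f : R, deg f ≤ n →
    ∃ L : List R, f = L.prod ∧ ∀ p ∈ L, Irred p := by
  induction n using Nat.strong_induction_on with
  | _ n ih =>
    intro f hf
    by_cases hirr : Irred f
    · exact ⟨[f], by simp, by simpa using hirr⟩
    · rw [Irred, not_not] at hirr
      obtain ⟨g, h, heq, hg, hh⟩ := hirr
      have hgne := deg_pos_ne_zero hg
      have hhne := deg_pos_ne_zero hh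
      have hdeg := (mul_ne_zero' hgne hhne).2
      rw [← heq] at hdeg
      have hn : 0 < n := by omega
      obtain ⟨Lg, hLg, hLgi⟩ := ih (n - 1) (by omega) g (by omega)
      obtain ⟨Lh, hLh, hLhi⟩ := ih (n - 1) (by omega) h (by omega)
      refine ⟨Lg ++ Lh, by rw [heq, List.prod_append, hLg, hLh], ?_⟩
      intro p hp
      rcases List.mem_append.mp hp with h' | h'
      · exact hLgi p h'
      · exact hLhi p h'

end Stmt11Aux

theorem stmt11 {F X : Type} [Field F] (f : MonoidAlgebra F (FreeMonoid X)) (d : Nat)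
    (hf : Homog f d) :
    (∃ L : List (MonoidAlgebra F (FreeMonoid X)), f = L.prod ∧ ∀ p ∈ L, Irred p) ∧
    (∀ gs us : List (MonoidAlgebra F (FreeMonoid X)),
      f = gs.prod → f = us.prod →
      (∀ p ∈ gs, Irred p ∧ 0 < deg p) → (∀ p ∈ us, Irred p ∧ 0 < deg p) →
      gs.length = us.length ∧
        ∀ (i : Nat) (hi : i < gs.length) (hi' : i < us.length),
          ∃ α : F, α ≠ 0 ∧ gs.get ⟨i, hi⟩ = α • us.get ⟨i, hi'⟩) := by
  constructor
  · exact Stmt11Aux.exists_fact (deg f) f le_rfl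
  · intro gs us hgsp husp hgsi husi
    exact Stmt11Aux.main_ind gs.length gs us rfl (by rw [← hgsp, ← husp]) hgsi husi
      ⟨d, by rw [← hgsp]; exact hf⟩
end

section
/- Let f ∈ F⟨X⟩ be homogeneous of degree d = d_1 + d_2 and let A_f be the matrix whose rows are indexed by degree-d_1 monomials, columns by degree-d_2 monomials, with entry A_f(m, m') equal to the coefficient of m·m' in f. Then f can be written as f = Σ_{i=1}^{k} g_i·h_i with each g_i homogeneous of degree d_1 and each h_i homogeneous of degree d_2 if and only if the rank of A_f is at most k. -/
/-- The partial-derivative (coefficient) matrix of `f`: rows are indexed by degree-`d1`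
monomials (as functions `Fin d1 → X`), columns by degree-`d2` monomials, and the entry
at `(m, m')` is the coefficient of the word `m * m'` in `f`. -/
noncomputable def Amat {F X : Type} [Field F] (d1 d2 : Nat)
    (f : MonoidAlgebra F (FreeMonoid X)) : Matrix (Fin d1 → X) (Fin d2 → X) F :=
  Matrix.of fun v w => f.coeff (FreeMonoid.ofList (List.ofFn v ++ List.ofFn w))

set_option linter.unusedSectionVars false
namespace Stmt13Aux

variable {F X : Type} [Field F] [Fintype X] [DecidableEq X]

def mono {d : ℕ} (v : Fin d → X) : FreeMonoid X := FreeMonoid.ofList (List.ofFn v)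

lemma length_mono {d : ℕ} (v : Fin d → X) : FreeMonoid.length (mono v) = d := by
  show (List.ofFn v).length = d
  simp

lemma mono_injective {d : ℕ} : Function.Injective (mono (d := d) (X := X)) := by
  intro a b h
  exact List.ofFn_injective (congrArg FreeMonoid.toList h)

lemma exists_mono {d : ℕ} (m : FreeMonoid X) (hm : FreeMonoid.length m = d) :
    ∃ v : Fin d → X, mono v = m := by
  refine ⟨fun i => (FreeMonoid.toList m).get (Fin.cast hm.symm i), ?_⟩
  show FreeMonoid.ofList (List.ofFn _) = m
  have : List.ofFn (fun i : Fin d => (FreeMonoid.toList m).get (Fin.cast hm.symm i)) =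
      FreeMonoid.toList m := by
    apply List.ext_get
    · simp only [List.length_ofFn]; exact hm.symm
    · intro i h1 h2
      simp
      rfl
  rw [this]
  rfl

lemma mono_append {d1 d2 : ℕ} (v : Fin d1 → X) (w : Fin d2 → X) :
    mono (Fin.append v w) = mono v * mono w := by
  simp [mono, List.ofFn_fin_append, FreeMonoid.ofList_append]

def appendEquiv (d1 d2 : ℕ) : ((Fin d1 → X) × (Fin d2 → X)) ≃ (Fin (d1 + d2) → X) where
  toFun p := Fin.append p.1 p.2
  invFun u := (u ∘ Fin.castAdd d2, u ∘ Fin.natAdd d1)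
  left_inv p := by
    refine Prod.ext (funext fun i => ?_) (funext fun i => ?_)
    · exact Fin.append_left _ _ i
    · exact Fin.append_right _ _ i
  right_inv u := by
    funext i
    refine Fin.addCases (fun i => ?_) (fun i => ?_) i
    · simp [Fin.append_left]
    · simp [Fin.append_right]

lemma pair_inj {d1 d2 : ℕ} {a v : Fin d1 → X} {b w : Fin d2 → X} :
    mono a * mono b = mono v * mono w ↔ a = v ∧ b = w := by
  constructor
  · intro h
    rw [← mono_append, ← mono_append] at h
    have h2 : Fin.append a b = Fin.append v w := mono_injective h
    have h3 : appendEquiv d1 d2 (a, b) = appendEquiv d1 d2 (v, w) := h2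
    have h4 := (appendEquiv d1 d2).injective h3
    exact ⟨congrArg Prod.fst h4, congrArg Prod.snd h4⟩
  · rintro ⟨rfl, rfl⟩; rfl

lemma homog_decomp {d : ℕ} (f : MonoidAlgebra F (FreeMonoid X)) (hf : Homog f d) :
    f = ∑ v : Fin d → X, MonoidAlgebra.single (mono v) (f.coeff (mono v)) := by
  ext m
  rw [MonoidAlgebra.coeff_sum, Finset.sum_apply']
  simp only [MonoidAlgebra.coeff_single]
  by_cases hm : FreeMonoid.length m = d
  · obtain ⟨v₀, rfl⟩ := exists_mono m hm
    rw [Finset.sum_eq_single v₀]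
    · rw [Finsupp.single_eq_same]
    · intro v _ hv
      exact Finsupp.single_eq_of_ne (fun h => hv (mono_injective h.symm))
    · simp
  · have hm0 : f.coeff m = 0 := by
      by_contra h
      exact hm (hf m (Finsupp.mem_support_iff.mpr h))
    rw [hm0]
    apply (Finset.sum_eq_zero _).symm
    intro v _
    exact Finsupp.single_eq_of_ne (fun h => hm (h ▸ length_mono v))

lemma decomp2 (d1 d2 : ℕ) (f : MonoidAlgebra F (FreeMonoid X)) (hf : Homog f (d1 + d2)) :
    f = ∑ v : Fin d1 → X, ∑ w : Fin d2 → X,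
        MonoidAlgebra.single (mono v * mono w) (f.coeff (mono v * mono w)) := by
  conv_lhs => rw [homog_decomp f hf]
  rw [← Finset.sum_product']
  exact (Fintype.sum_equiv (appendEquiv d1 d2)
    (fun p => MonoidAlgebra.single (mono p.1 * mono p.2) (f.coeff (mono p.1 * mono p.2)))
    (fun u => MonoidAlgebra.single (mono u) (f.coeff (mono u)))
    (fun p => by simp only [appendEquiv, Equiv.coe_fn_mk, mono_append])).symm

lemma amat_apply' (d1 d2 : ℕ) (f : MonoidAlgebra F (FreeMonoid X)) (v : Fin d1 → X)
    (w : Fin d2 → X) : Amat d1 d2 f v w = f.coeff (mono v * mono w) := rfl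

lemma amat_mul_homog {d1 d2 : ℕ} (g h : MonoidAlgebra F (FreeMonoid X))
    (hg : Homog g d1) (hh : Homog h d2) :
    Amat d1 d2 (g * h) = Matrix.vecMulVec (fun v => g.coeff (mono v)) (fun w => h.coeff (mono w)) := by
  conv_lhs => rw [homog_decomp g hg, homog_decomp h hh]
  ext v w
  rw [amat_apply', Matrix.vecMulVec_apply, Finset.sum_mul_sum, MonoidAlgebra.coeff_sum, Finset.sum_apply']
  rw [Finset.sum_eq_single v]
  · rw [MonoidAlgebra.coeff_sum, Finset.sum_apply', Finset.sum_eq_single w]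
    · rw [MonoidAlgebra.single_mul_single, MonoidAlgebra.coeff_single, Finsupp.single_eq_same]
    · intro b _ hb
      rw [MonoidAlgebra.single_mul_single, MonoidAlgebra.coeff_single]
      exact Finsupp.single_eq_of_ne (fun h' => hb (pair_inj.mp h'.symm).2)
    · simp
  · intro a _ ha
    rw [MonoidAlgebra.coeff_sum, Finset.sum_apply']
    apply Finset.sum_eq_zero
    intro b _
    rw [MonoidAlgebra.single_mul_single, MonoidAlgebra.coeff_single]
    exact Finsupp.single_eq_of_ne (fun h' => ha (pair_inj.mp h'.symm).1)
  · simp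

lemma exists_factorization {m n : Type} [Fintype m] [Fintype n] [DecidableEq n]
    (M : Matrix m n F) {k : ℕ} (hk : M.rank ≤ k) :
    ∃ B : Matrix m (Fin k) F, ∃ C : Matrix (Fin k) n F, M = B * C := by
  have hmem : ∀ j, (fun i => M i j) ∈ LinearMap.range M.mulVecLin := fun j =>
    ⟨Pi.single j 1, by ext i; simp [Matrix.mulVecLin_apply]⟩
  set V := LinearMap.range M.mulVecLin with hV
  set r := M.rank with hr
  let b : Module.Basis (Fin r) F V := Module.finBasis F V
  have hcol : ∀ j, (fun v => M v j) =
      ∑ i, (b.repr ⟨fun v => M v j, hmem j⟩ i) • ((b i : m → F)) := by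
    intro j
    have h1 := congrArg (Submodule.subtype V) (b.sum_repr ⟨fun v => M v j, hmem j⟩)
    rw [map_sum] at h1
    simp only [map_smul, Submodule.coe_subtype] at h1
    exact h1.symm
  refine ⟨fun v i => if h : (i : ℕ) < r then (b ⟨i, h⟩ : m → F) v else 0,
      fun i j => if h : (i : ℕ) < r then b.repr ⟨fun v => M v j, hmem j⟩ ⟨i, h⟩ else 0, ?_⟩
  refine Matrix.ext fun v j => ?_
  erw [Matrix.mul_apply]
  have hterm : ∀ i : Fin k, (if h : (i : ℕ) < r then (b ⟨i, h⟩ : m → F) v else 0) *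
      (if h : (i : ℕ) < r then b.repr ⟨fun v => M v j, hmem j⟩ ⟨i, h⟩ else 0) =
      (fun t : ℕ => if h : t < r then
        (b ⟨t, h⟩ : m → F) v * b.repr ⟨fun v => M v j, hmem j⟩ ⟨t, h⟩ else 0) (i : ℕ) := by
    intro i
    by_cases h : (i : ℕ) < r
    · simp only [dif_pos h]
    · simp only [dif_neg h, zero_mul]
  rw [Finset.sum_congr rfl (fun i _ => hterm i),
    Fin.sum_univ_eq_sum_range (fun t : ℕ => if h : t < r then
      (b ⟨t, h⟩ : m → F) v * b.repr ⟨fun v => M v j, hmem j⟩ ⟨t, h⟩ else 0) k]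
  rw [← Finset.sum_subset (Finset.range_subset_range.mpr hk)
      (fun x _ hx => dif_neg (fun hh => hx (Finset.mem_range.mpr hh)))]
  rw [← Fin.sum_univ_eq_sum_range (fun t : ℕ => if h : t < r then
      (b ⟨t, h⟩ : m → F) v * b.repr ⟨fun v => M v j, hmem j⟩ ⟨t, h⟩ else 0) r]
  have h2 := congrFun (hcol j) v
  rw [Finset.sum_apply] at h2
  simp only [Pi.smul_apply, smul_eq_mul] at h2
  rw [h2]
  apply Finset.sum_congr rfl
  intro i _
  simp only [dif_pos i.isLt, Fin.eta]
  rw [mul_comm]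

lemma amat_sum {ι : Type} (s : Finset ι) (t : ι → MonoidAlgebra F (FreeMonoid X)) (d1 d2 : ℕ) :
    Amat d1 d2 (∑ i ∈ s, t i) = ∑ i ∈ s, Amat d1 d2 (t i) := by
  ext v w
  rw [Matrix.sum_apply, amat_apply', MonoidAlgebra.coeff_sum, Finset.sum_apply']
  exact Finset.sum_congr rfl fun i _ => (amat_apply' _ _ _ _ _).symm

end Stmt13Aux

open Stmt13Aux

theorem stmt13 {F X : Type} [Field F] [Fintype X] [DecidableEq X]
    (d1 d2 k : Nat) (f : MonoidAlgebra F (FreeMonoid X)) (hf : Homog f (d1 + d2)) :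
    (∃ g h : Fin k → MonoidAlgebra F (FreeMonoid X),
        (∀ i, Homog (g i) d1 ∧ Homog (h i) d2) ∧ f = ∑ i, g i * h i) ↔
      (Amat d1 d2 f).rank ≤ k := by
  constructor
  · rintro ⟨g, h, hgh, rfl⟩
    have hBC : Amat d1 d2 (∑ i, g i * h i) =
        (Matrix.of fun v i => (g i).coeff (mono v)) * (Matrix.of fun i w => (h i).coeff (mono w)) := by
      rw [amat_sum]
      ext v w
      rw [Matrix.sum_apply, Matrix.mul_apply]
      apply Finset.sum_congr rfl
      intro i _
      rw [amat_mul_homog (g i) (h i) (hgh i).1 (hgh i).2, Matrix.vecMulVec_apply]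
      rfl
    rw [hBC]
    calc ((Matrix.of fun v i => (g i).coeff (mono v)) * (Matrix.of fun i w => (h i).coeff (mono w))).rank
        ≤ (Matrix.of fun v i => (g i).coeff (mono v)).rank := Matrix.rank_mul_le_left _ _
      _ ≤ Fintype.card (Fin k) := Matrix.rank_le_card_width _
      _ = k := Fintype.card_fin k
  · intro hk
    obtain ⟨B, C, hBC⟩ := exists_factorization (Amat d1 d2 f) hk
    refine ⟨fun i => ∑ v : Fin d1 → X, MonoidAlgebra.single (mono v) (B v i),
        fun i => ∑ w : Fin d2 → X, MonoidAlgebra.single (mono w) (C i w), ?_, ?_⟩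
    · intro i
      constructor
      · intro m hm
        rw [MonoidAlgebra.coeff_sum] at hm
        obtain ⟨v, _, hv⟩ := Finsupp.mem_support_finset_sum m hm
        rw [MonoidAlgebra.coeff_single] at hv
        have := Finsupp.support_single_subset hv
        rw [Finset.mem_singleton] at this
        rw [this, length_mono]
      · intro m hm
        rw [MonoidAlgebra.coeff_sum] at hm
        obtain ⟨w, _, hw⟩ := Finsupp.mem_support_finset_sum m hm
        rw [MonoidAlgebra.coeff_single] at hw
        have := Finsupp.support_single_subset hw
        rw [Finset.mem_singleton] at this
        rw [this, length_mono]
    · have key : ∀ i : Fin k,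
          (∑ v : Fin d1 → X, MonoidAlgebra.single (mono v) (B v i)) *
          (∑ w : Fin d2 → X, MonoidAlgebra.single (mono w) (C i w)) =
          ∑ v : Fin d1 → X, ∑ w : Fin d2 → X,
            MonoidAlgebra.single (mono v * mono w) (B v i * C i w) := by
        intro i
        rw [Finset.sum_mul_sum]
        exact Finset.sum_congr rfl fun v _ => Finset.sum_congr rfl fun w _ =>
          MonoidAlgebra.single_mul_single ..
      calc f = ∑ v : Fin d1 → X, ∑ w : Fin d2 → X,
            MonoidAlgebra.single (mono v * mono w) (f.coeff (mono v * mono w)) := decomp2 d1 d2 f hf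
        _ = ∑ v : Fin d1 → X, ∑ w : Fin d2 → X,
            MonoidAlgebra.single (mono v * mono w) (∑ i : Fin k, B v i * C i w) := by
          apply Finset.sum_congr rfl
          intro v _
          apply Finset.sum_congr rfl
          intro w _
          congr 1
          rw [← amat_apply' d1 d2 f v w, hBC, Matrix.mul_apply]
        _ = ∑ v : Fin d1 → X, ∑ w : Fin d2 → X, ∑ i : Fin k,
            MonoidAlgebra.single (mono v * mono w) (B v i * C i w) := by
          apply Finset.sum_congr rfl
          intro v _
          apply Finset.sum_congr rfl
          intro w _
          exact map_sum (MonoidAlgebra.singleAddHom (mono v * mono w)) _ _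
        _ = ∑ i : Fin k, ∑ v : Fin d1 → X, ∑ w : Fin d2 → X,
            MonoidAlgebra.single (mono v * mono w) (B v i * C i w) := by
          rw [show (∑ v : Fin d1 → X, ∑ w : Fin d2 → X, ∑ i : Fin k,
              (MonoidAlgebra.single (mono v * mono w) : F → MonoidAlgebra F (FreeMonoid X)) (B v i * C i w)) =
              ∑ v : Fin d1 → X, ∑ i : Fin k, ∑ w : Fin d2 → X,
              MonoidAlgebra.single (mono v * mono w) (B v i * C i w) from
            Finset.sum_congr rfl fun v _ => Finset.sum_comm]
          exact Finset.sum_comm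
        _ = ∑ i, (∑ v : Fin d1 → X, MonoidAlgebra.single (mono v) (B v i)) *
            (∑ w : Fin d2 → X, MonoidAlgebra.single (mono w) (C i w)) := by
          exact Finset.sum_congr rfl fun i _ => (key i).symm
end

section
/- Let f ∈ F⟨X⟩ be homogeneous of degree d, and let f' ∈ F⟨{x_{ij} : i∈[n], j∈[d]}⟩ be obtained by replacing, in each monomial of f, the variable in position j by its position-tagged copy (x_i in position j becomes x_{ij}). Then f' is variable-disjoint irreducible if and only if f is irreducible. -/
/-- Position-tagging: each monomial of `f` is replaced by the word whose `j`-th letter is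
the pair `(j, x)` where `x` is the `j`-th letter of the original monomial. -/
noncomputable def tagPoly {F X : Type} [Field F] (f : MonoidAlgebra F (FreeMonoid X)) :
    MonoidAlgebra F (FreeMonoid (Nat × X)) :=
  MonoidAlgebra.ofCoeff
    (Finsupp.mapDomain (fun m => FreeMonoid.ofList ((FreeMonoid.toList m).zipIdx.map Prod.swap)) f.coeff)

section Aux

variable {F X Y : Type} [Field F]

private lemma toList_inj {α : Type*} {a b : FreeMonoid α}
    (h : FreeMonoid.toList a = FreeMonoid.toList b) : a = b := by
  rw [← FreeMonoid.ofList_toList a, h, FreeMonoid.ofList_toList]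

private lemma len_toList {α : Type*} (a : FreeMonoid α) :
    (FreeMonoid.toList a).length = FreeMonoid.length a := rfl

private lemma mulApplyUnique {g h : MonoidAlgebra F (FreeMonoid X)} {a₀ b₀ : FreeMonoid X}
    (ha₀ : a₀ ∈ g.coeff.support) (hb₀ : b₀ ∈ h.coeff.support)
    (hu : ∀ a ∈ g.coeff.support, ∀ b ∈ h.coeff.support, a * b = a₀ * b₀ → a = a₀ ∧ b = b₀) :
    (g * h).coeff (a₀ * b₀) = g.coeff a₀ * h.coeff b₀ := by
  classical
  have h_outer : ∀ a ∈ g.coeff.support, a ≠ a₀ →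
      (∑ b ∈ h.coeff.support, if a * b = a₀ * b₀ then g.coeff a * h.coeff b else 0) = 0 := by
    intro a ha hne
    apply Finset.sum_eq_zero
    intro b hb
    rw [if_neg]
    intro hab
    exact hne (hu a ha b hb hab).1
  have h_inner : ∀ b ∈ h.coeff.support, b ≠ b₀ →
      (if a₀ * b = a₀ * b₀ then g.coeff a₀ * h.coeff b else 0) = 0 := by
    intro b hb hne
    rw [if_neg]
    intro hab
    exact hne (hu a₀ ha₀ b hb hab).2
  rw [MonoidAlgebra.coeff_mul]
  simp only [Finsupp.sum]
  rw [Finset.sum_eq_single_of_mem a₀ ha₀ h_outer,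
    Finset.sum_eq_single_of_mem b₀ hb₀ h_inner, if_pos rfl]

private lemma prod_mem_support {g h : MonoidAlgebra F (FreeMonoid X)} {a₀ b₀ : FreeMonoid X}
    (ha₀ : a₀ ∈ g.coeff.support) (hb₀ : b₀ ∈ h.coeff.support)
    (hlen : ∀ a ∈ g.coeff.support, ∀ b ∈ h.coeff.support,
      FreeMonoid.length a + FreeMonoid.length b = FreeMonoid.length a₀ + FreeMonoid.length b₀ →
      FreeMonoid.length a = FreeMonoid.length a₀) :
    a₀ * b₀ ∈ (g * h).coeff.support := by
  have hu : ∀ a ∈ g.coeff.support, ∀ b ∈ h.coeff.support, a * b = a₀ * b₀ → a = a₀ ∧ b = b₀ := by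
    intro a ha b hb hab
    have hl : FreeMonoid.length a + FreeMonoid.length b
        = FreeMonoid.length a₀ + FreeMonoid.length b₀ := by
      rw [← FreeMonoid.length_mul, ← FreeMonoid.length_mul, hab]
    have hla : FreeMonoid.length a = FreeMonoid.length a₀ := hlen a ha b hb hl
    have ht := congrArg FreeMonoid.toList hab
    rw [FreeMonoid.toList_mul, FreeMonoid.toList_mul] at ht
    have hinj := List.append_inj ht (by rw [len_toList, len_toList, hla])
    exact ⟨toList_inj hinj.1, toList_inj hinj.2⟩
  rw [Finsupp.mem_support_iff, mulApplyUnique ha₀ hb₀ hu]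
  exact mul_ne_zero (Finsupp.mem_support_iff.mp ha₀) (Finsupp.mem_support_iff.mp hb₀)

private lemma deg_pos_ne_zero {g : MonoidAlgebra F (FreeMonoid X)} (hg : 0 < deg g) : g ≠ 0 := by
  intro h
  rw [h] at hg
  simp [deg] at hg

private lemma exists_top {g h : MonoidAlgebra F (FreeMonoid X)} (hg : g ≠ 0) (hh : h ≠ 0) :
    ∃ w ∈ (g * h).coeff.support, FreeMonoid.length w = deg g + deg h := by
  obtain ⟨a₀, ha₀, hda⟩ := Finset.exists_mem_eq_sup g.coeff.support
    (Finsupp.support_nonempty_iff.mpr (mt MonoidAlgebra.coeff_eq_zero.mp hg)) FreeMonoid.length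
  obtain ⟨b₀, hb₀, hdb⟩ := Finset.exists_mem_eq_sup h.coeff.support
    (Finsupp.support_nonempty_iff.mpr (mt MonoidAlgebra.coeff_eq_zero.mp hh)) FreeMonoid.length
  refine ⟨a₀ * b₀, prod_mem_support ha₀ hb₀ ?_, by rw [FreeMonoid.length_mul, ← hda, ← hdb]; rfl⟩
  intro a ha b hb hl
  have h1 : FreeMonoid.length a ≤ FreeMonoid.length a₀ := hda ▸ Finset.le_sup ha
  have h2 : FreeMonoid.length b ≤ FreeMonoid.length b₀ := hdb ▸ Finset.le_sup hb
  omega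

private lemma exists_bot {g h : MonoidAlgebra F (FreeMonoid X)} (hg : g ≠ 0) (hh : h ≠ 0) :
    ∃ a₀ ∈ g.coeff.support, ∃ b₀ ∈ h.coeff.support, a₀ * b₀ ∈ (g * h).coeff.support ∧
      (∀ a ∈ g.coeff.support, FreeMonoid.length a₀ ≤ FreeMonoid.length a) ∧
      (∀ b ∈ h.coeff.support, FreeMonoid.length b₀ ≤ FreeMonoid.length b) := by
  obtain ⟨a₀, ha₀, hda⟩ := Finset.exists_min_image g.coeff.support FreeMonoid.length
    (Finsupp.support_nonempty_iff.mpr (mt MonoidAlgebra.coeff_eq_zero.mp hg))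
  obtain ⟨b₀, hb₀, hdb⟩ := Finset.exists_min_image h.coeff.support FreeMonoid.length
    (Finsupp.support_nonempty_iff.mpr (mt MonoidAlgebra.coeff_eq_zero.mp hh))
  refine ⟨a₀, ha₀, b₀, hb₀, prod_mem_support ha₀ hb₀ ?_, hda, hdb⟩
  intro a ha b hb hl
  have h1 := hda a ha
  have h2 := hdb b hb
  omega

private lemma homog_factors {f g h : MonoidAlgebra F (FreeMonoid X)} {d : ℕ}
    (hf : Homog f d) (hfgh : f = g * h) (hg : g ≠ 0) (hh : h ≠ 0) :
    Homog g (deg g) ∧ Homog h (deg h) ∧ deg g + deg h = d := by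
  obtain ⟨w, hw, hwl⟩ := exists_top hg hh
  rw [← hfgh] at hw
  have hsum : deg g + deg h = d := by rw [← hwl]; exact hf w hw
  obtain ⟨a₀, ha₀, b₀, hb₀, hab, hmina, hminb⟩ := exists_bot hg hh
  rw [← hfgh] at hab
  have hbotsum : FreeMonoid.length a₀ + FreeMonoid.length b₀ = d := by
    rw [← hf _ hab, FreeMonoid.length_mul]
  have hla : FreeMonoid.length a₀ ≤ deg g := Finset.le_sup ha₀
  have hlb : FreeMonoid.length b₀ ≤ deg h := Finset.le_sup hb₀
  refine ⟨?_, ?_, hsum⟩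
  · intro m hm
    have e1 := hmina m hm
    have e2 := Finset.le_sup (f := FreeMonoid.length) hm
    simp only [deg] at hsum hla hlb ⊢
    omega
  · intro m hm
    have e1 := hminb m hm
    have e2 := Finset.le_sup (f := FreeMonoid.length) hm
    simp only [deg] at hsum hla hlb ⊢
    omega

end Aux
section Tag

variable {F X : Type} [Field F]

private def tagFrom {X : Type} (n : ℕ) (m : FreeMonoid X) : FreeMonoid (ℕ × X) :=
  FreeMonoid.ofList (((FreeMonoid.toList m).zipIdx n).map Prod.swap)

private lemma tagPoly_eq (f : MonoidAlgebra F (FreeMonoid X)) :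
    tagPoly f = MonoidAlgebra.mapDomain (tagFrom 0) f := by
  rfl

private lemma untag_tagFrom (n : ℕ) (m : FreeMonoid X) :
    FreeMonoid.map Prod.snd (tagFrom n m) = m := by
  apply toList_inj
  rw [FreeMonoid.toList_map]
  simp [tagFrom, List.map_map, List.zipIdx_map_fst, Function.comp_def]

private lemma tagFrom_inj (n : ℕ) : Function.Injective (tagFrom (X := X) n) := by
  intro a b hab
  have := congrArg (FreeMonoid.map Prod.snd) hab
  rwa [untag_tagFrom, untag_tagFrom] at this

private lemma length_tagFrom (n : ℕ) (m : FreeMonoid X) :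
    FreeMonoid.length (tagFrom n m) = FreeMonoid.length m := by
  rw [← len_toList, ← len_toList]
  simp [tagFrom]

private lemma length_untag (m : FreeMonoid (ℕ × X)) :
    FreeMonoid.length (FreeMonoid.map Prod.snd m) = FreeMonoid.length m := by
  rw [← len_toList, ← len_toList, FreeMonoid.toList_map, List.length_map]

private lemma tagFrom_mul {n a : ℕ} {m₁ m₂ : FreeMonoid X} (h : FreeMonoid.length m₁ = a) :
    tagFrom n (m₁ * m₂) = tagFrom n m₁ * tagFrom (n + a) m₂ := by
  apply toList_inj
  simp only [tagFrom, FreeMonoid.toList_ofList, FreeMonoid.toList_mul, List.zipIdx_append, List.map_append]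
  rw [len_toList, h]

private lemma homog_mapDomain {Y : Type} {T : FreeMonoid X → FreeMonoid Y}
    (hT : ∀ m, FreeMonoid.length (T m) = FreeMonoid.length m)
    {g : MonoidAlgebra F (FreeMonoid X)} {a : ℕ} (hg : Homog g a) :
    Homog (MonoidAlgebra.mapDomain T g) a := by
  classical
  intro m hm
  obtain ⟨m₀, hm₀, rfl⟩ := Finset.mem_image.mp (Finsupp.mapDomain_support hm)
  rw [hT]
  exact hg m₀ hm₀

private lemma mapDomain_ne_zero {Y : Type} {T : FreeMonoid X → FreeMonoid Y}
    (hT : Function.Injective T) {g : MonoidAlgebra F (FreeMonoid X)} (hg : g ≠ 0) :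
    MonoidAlgebra.mapDomain T g ≠ 0 := by
  intro h0
  exact hg (MonoidAlgebra.mapDomain_injective hT (by simpa using h0))

private lemma deg_homog {Z : Type} {g : MonoidAlgebra F (FreeMonoid Z)} {a : ℕ}
    (hg0 : g ≠ 0) (hg : Homog g a) : deg g = a := by
  obtain ⟨m, hm⟩ := Finsupp.support_nonempty_iff.mpr (mt MonoidAlgebra.coeff_eq_zero.mp hg0)
  apply le_antisymm
  · exact Finset.sup_le fun m' hm' => le_of_eq (hg m' hm')
  · rw [← hg m hm]
    exact Finset.le_sup hm

private lemma mapDomain_mul_of {Y : Type} {T T₁ T₂ : FreeMonoid X → FreeMonoid Y}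
    {g h : MonoidAlgebra F (FreeMonoid X)}
    (hT : ∀ a ∈ g.coeff.support, ∀ b, T (a * b) = T₁ a * T₂ b) :
    MonoidAlgebra.mapDomain T (g * h)
      = MonoidAlgebra.mapDomain T₁ g * MonoidAlgebra.mapDomain T₂ h := by
  rw [MonoidAlgebra.mul_def, MonoidAlgebra.mapDomain_sum]
  have hrhs : MonoidAlgebra.mapDomain T₁ g * MonoidAlgebra.mapDomain T₂ h
      = g.coeff.sum fun a b₁ => h.coeff.sum fun a₂ b₂ =>
          MonoidAlgebra.single (T₁ a) b₁ * MonoidAlgebra.single (T₂ a₂) b₂ := by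
    have e : ∀ (T' : FreeMonoid X → FreeMonoid Y) (k : MonoidAlgebra F (FreeMonoid X)),
        MonoidAlgebra.mapDomain T' k = k.coeff.sum fun a b => MonoidAlgebra.single (T' a) b := by
      intro T' k
      apply MonoidAlgebra.coeff_injective
      simp [MonoidAlgebra.coeff_finsuppSum, Finsupp.mapDomain]
    rw [e, e, Finsupp.sum_mul]
    apply Finsupp.sum_congr
    intro a _
    rw [Finsupp.mul_sum]
  rw [hrhs]
  apply Finsupp.sum_congr
  intro a ha
  rw [MonoidAlgebra.mapDomain_sum]
  apply Finsupp.sum_congr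
  intro b _
  rw [MonoidAlgebra.mapDomain_single, hT a ha b]
  exact (MonoidAlgebra.single_mul_single ..).symm

private lemma mem_tagFrom_bounds {n a : ℕ} {g : MonoidAlgebra F (FreeMonoid X)}
    (hg : Homog g a) {p : ℕ × X} (hp : p ∈ vars (MonoidAlgebra.mapDomain (tagFrom n) g)) :
    n ≤ p.1 ∧ p.1 < n + a := by
  classical
  obtain ⟨m, hm, hpm⟩ := hp
  obtain ⟨m₀, hm₀, rfl⟩ := Finset.mem_image.mp (Finsupp.mapDomain_support hm)
  have ht : (FreeMonoid.toList (tagFrom n m₀)) = ((FreeMonoid.toList m₀).zipIdx n).map Prod.swap :=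
    FreeMonoid.toList_ofList _
  rw [ht] at hpm
  obtain ⟨i, x⟩ := p
  have hb := List.mem_zipIdx (x := x) (i := i) (by simpa using hpm)
  have hl : (FreeMonoid.toList m₀).length = a := by rw [len_toList]; exact hg m₀ hm₀
  refine ⟨hb.1, ?_⟩
  show i < n + a
  have := hb.2.1
  omega

private lemma untag_tagPoly (f : MonoidAlgebra F (FreeMonoid X)) :
    MonoidAlgebra.mapDomain (⇑(FreeMonoid.map (Prod.snd : ℕ × X → X))) (tagPoly f) = f := by
  rw [tagPoly_eq]
  unfold MonoidAlgebra.mapDomain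
  simp only [MonoidAlgebra.coeff_ofCoeff]
  rw [← Finsupp.mapDomain_comp]
  have h : (⇑(FreeMonoid.map (Prod.snd : ℕ × X → X)) ∘ tagFrom 0) = id :=
    funext fun m => untag_tagFrom 0 m
  rw [h, Finsupp.mapDomain_id]

end Tag
theorem stmt16 {F X : Type} [Field F] (f : MonoidAlgebra F (FreeMonoid X)) (d : Nat)
    (hf : Homog f d) : VDIrred (tagPoly f) ↔ Irred f := by
  constructor
  · -- VDIrred (tagPoly f) → Irred f
    intro hVD
    rintro ⟨g, h, hfgh, hg, hh⟩
    apply hVD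
    have hg0 : g ≠ 0 := deg_pos_ne_zero hg
    have hh0 : h ≠ 0 := deg_pos_ne_zero hh
    obtain ⟨hgH, hhH, hsum⟩ := homog_factors hf hfgh hg0 hh0
    refine ⟨MonoidAlgebra.mapDomain (tagFrom 0) g,
      MonoidAlgebra.mapDomain (tagFrom (deg g)) h, ?_, ?_, ?_, ?_⟩
    · rw [tagPoly_eq, hfgh]
      refine mapDomain_mul_of ?_
      intro a ha b
      have := tagFrom_mul (n := 0) (a := deg g) (m₁ := a) (m₂ := b) (hgH a ha)
      rwa [zero_add] at this
    · rw [deg_homog (mapDomain_ne_zero (tagFrom_inj 0) hg0)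
        (homog_mapDomain (length_tagFrom 0) hgH)]
      exact hg
    · rw [deg_homog (mapDomain_ne_zero (tagFrom_inj (deg g)) hh0)
        (homog_mapDomain (length_tagFrom (deg g)) hhH)]
      exact hh
    · ext p
      simp only [Set.mem_inter_iff, Set.mem_empty_iff_false, iff_false, not_and]
      intro hp1 hp2
      have b1 := mem_tagFrom_bounds hgH hp1
      have b2 := mem_tagFrom_bounds hhH hp2
      omega
  · -- Irred f → VDIrred (tagPoly f)
    intro hI
    rintro ⟨G, H, hEq, hG, hH, -⟩
    apply hI
    have hG0 : G ≠ 0 := deg_pos_ne_zero hG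
    have hH0 : H ≠ 0 := deg_pos_ne_zero hH
    have hfT : Homog (tagPoly f) d := by
      rw [tagPoly_eq]
      exact homog_mapDomain (length_tagFrom 0) hf
    obtain ⟨hGH, hHH, hsum⟩ := homog_factors hfT hEq hG0 hH0
    have hfu : f = MonoidAlgebra.mapDomain (⇑(FreeMonoid.map (Prod.snd : ℕ × X → X))) G
        * MonoidAlgebra.mapDomain (⇑(FreeMonoid.map (Prod.snd : ℕ × X → X))) H := by
      rw [← untag_tagPoly f, hEq]
      exact MonoidAlgebra.mapDomain_mul (FreeMonoid.map Prod.snd) G H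
    have hf0 : f ≠ 0 := by
      intro h0
      obtain ⟨w, hw, -⟩ := exists_top hG0 hH0
      rw [← hEq] at hw
      rw [h0, tagPoly_eq] at hw
      have : MonoidAlgebra.mapDomain (tagFrom (X := X) 0) 0
          = (0 : MonoidAlgebra F (FreeMonoid (ℕ × X))) := MonoidAlgebra.mapDomain_zero _
      rw [this] at hw
      simp at hw
    have hUG0 : MonoidAlgebra.mapDomain (⇑(FreeMonoid.map (Prod.snd : ℕ × X → X))) G ≠ 0 := by
      intro h0
      apply hf0
      rw [hfu, h0, zero_mul]
    have hUH0 : MonoidAlgebra.mapDomain (⇑(FreeMonoid.map (Prod.snd : ℕ × X → X))) H ≠ 0 := by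
      intro h0
      apply hf0
      rw [hfu, h0, mul_zero]
    refine ⟨_, _, hfu, ?_, ?_⟩
    · rw [deg_homog hUG0 (homog_mapDomain length_untag hGH)]
      exact hG
    · rw [deg_homog hUH0 (homog_mapDomain length_untag hHH)]
      exact hH
end
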